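/- arXiv:2110.11706 — 12 statements merged into one kernel-verified Lean document; each statement's English description precedes it below -/
import Mathlib

section
/- Let A, B, C be n×n positive semidefinite complex matrices with A ≥ B (Loewner order). Then (I + AC)⁻¹A ≥ (I + BC)⁻¹B, where both inverses exist since I + AC and I + BC have spectrum contained in [1, ∞). -/
open Matrix ComplexOrder
open scoped MatrixOrder

section RingLemmas

variable {R : Type*} [Ring R]

private lemma ring1 (x y m : R) (h : (1 + x * y * x) * m = 1) :
    (1 + x * x * y) * (1 - x * m * x * y) = 1 := by
  have h2 : x * y * x * m = 1 - m := by
    rw [add_mul, one_mul] at h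
    exact eq_sub_of_add_eq' h
  have h3 : x * (x * y * x * m) * (x * y) = x * (1 - m) * (x * y) := by rw [h2]
  simp only [mul_sub, sub_mul, mul_add, add_mul, one_mul, mul_one, mul_assoc] at h3 ⊢
  rw [h3]
  abel

private lemma ring2 (x y : R) : y * (1 + x * (y * y)) = (1 + y * x * y) * y := by
  noncomm_ring

private lemma ring3 (p f c q : R) :
    (p + p * (f * f * c) * q) * f = p * f * (1 + f * (c * q) * f) := by
  noncomm_ring

private lemma ring4 (p u v q : R) : p * (u - v) * q = p * (u * q) - p * (v * q) := by
  noncomm_ring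

private lemma ring5 (p a b c q : R) :
    p * (a * (1 + c * b)) * q - p * ((1 + a * c) * b) * q = p * (a - b) * q := by
  noncomm_ring

private lemma ring6 (b c : R) : (1 + b * c) * b = b * (1 + c * b) := by
  noncomm_ring

end RingLemmas

/-- For PSD matrices `X`, `Y`, the matrix `1 + X * Y` has unit determinant. -/
lemma aux_isUnit_det {n : ℕ} {X Y : Matrix (Fin n) (Fin n) ℂ}
    (hX : X.PosSemidef) (hY : Y.PosSemidef) : IsUnit (1 + X * Y).det := by
  set Xs := CFC.sqrt X with hXs
  have hXsXs : Xs * Xs = X := CFC.sqrt_mul_sqrt_self X hX.nonneg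
  have hXsH : Xsᴴ = Xs := (Matrix.nonneg_iff_posSemidef.mp (CFC.sqrt_nonneg X)).isHermitian
  have hMpsd : (Xs * Y * Xs).PosSemidef := by
    have := hY.mul_mul_conjTranspose_same Xs
    rwa [hXsH] at this
  have hMpd : (1 + Xs * Y * Xs).PosDef := Matrix.PosDef.one.add_posSemidef hMpsd
  have hMdet : IsUnit (1 + Xs * Y * Xs).det := hMpd.det_pos.ne'.isUnit
  have hMMi : (1 + Xs * Y * Xs) * (1 + Xs * Y * Xs)⁻¹ = 1 :=
    Matrix.mul_nonsing_inv _ hMdet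
  have key : (1 + X * Y) * (1 - Xs * (1 + Xs * Y * Xs)⁻¹ * Xs * Y) = 1 := by
    rw [← hXsXs]
    exact ring1 Xs Y _ hMMi
  exact Matrix.isUnit_det_of_right_inverse key

/-- For PSD matrices `X`, `Y`, the matrix `Y * (1 + X * Y)⁻¹` is PSD. -/
lemma aux_psd {n : ℕ} {X Y : Matrix (Fin n) (Fin n) ℂ}
    (hX : X.PosSemidef) (hY : Y.PosSemidef) : (Y * (1 + X * Y)⁻¹).PosSemidef := by
  set Ys := CFC.sqrt Y with hYs
  have hYsYs : Ys * Ys = Y := CFC.sqrt_mul_sqrt_self Y hY.nonneg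
  have hYsH : Ysᴴ = Ys := (Matrix.nonneg_iff_posSemidef.mp (CFC.sqrt_nonneg Y)).isHermitian
  have hNpsd : (Ys * X * Ys).PosSemidef := by
    have := hX.mul_mul_conjTranspose_same Ys
    rwa [hYsH] at this
  have hNpd : (1 + Ys * X * Ys).PosDef := Matrix.PosDef.one.add_posSemidef hNpsd
  set N := 1 + Ys * X * Ys with hN
  have hNdet : IsUnit N.det := hNpd.det_pos.ne'.isUnit
  have hdet : IsUnit (1 + X * Y).det := aux_isUnit_det hX hY
  have key : Ys * N⁻¹ * Ys = Y * (1 + X * Y)⁻¹ := by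
    have hYsmul : Ys * (1 + X * Y) = N * Ys := by
      rw [hN, ← hYsYs]
      exact ring2 X Ys
    have hmain : Ys * N⁻¹ * Ys * (1 + X * Y) = Y := by
      calc Ys * N⁻¹ * Ys * (1 + X * Y) = Ys * N⁻¹ * (Ys * (1 + X * Y)) := by
            simp only [mul_assoc]
        _ = Ys * N⁻¹ * (N * Ys) := by rw [hYsmul]
        _ = Ys * (N⁻¹ * N) * Ys := by simp only [mul_assoc]
        _ = Y := by rw [Matrix.nonsing_inv_mul _ hNdet, mul_one, hYsYs]
    calc Ys * N⁻¹ * Ys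
        = Ys * N⁻¹ * Ys * ((1 + X * Y) * (1 + X * Y)⁻¹) := by
          rw [Matrix.mul_nonsing_inv _ hdet, mul_one]
      _ = Ys * N⁻¹ * Ys * (1 + X * Y) * (1 + X * Y)⁻¹ := by
          rw [mul_assoc (Ys * N⁻¹ * Ys)]
      _ = Y * (1 + X * Y)⁻¹ := by rw [hmain]
  rw [← key]
  have := hNpd.inv.posSemidef.mul_mul_conjTranspose_same Ys
  rwa [hYsH] at this

theorem stmt_0 (n : ℕ) (A B C : Matrix (Fin n) (Fin n) ℂ)
    (hA : A.PosSemidef) (hB : B.PosSemidef) (hC : C.PosSemidef)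
    (hAB : (A - B).PosSemidef) :
    ((1 + A * C)⁻¹ * A - (1 + B * C)⁻¹ * B).PosSemidef := by
  have hdA : IsUnit (1 + A * C).det := aux_isUnit_det hA hC
  have hdB : IsUnit (1 + B * C).det := aux_isUnit_det hB hC
  have hdCB : IsUnit (1 + C * B).det := aux_isUnit_det hC hB
  set P := (1 + A * C)⁻¹ with hP
  set Q := (1 + B * C)⁻¹ with hQ
  set Q' := (1 + C * B)⁻¹ with hQ'
  set F := CFC.sqrt (A - B) with hF
  have hFF : F * F = A - B := CFC.sqrt_mul_sqrt_self (A - B) hAB.nonneg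
  have hFH : Fᴴ = F := (Matrix.nonneg_iff_posSemidef.mp (CFC.sqrt_nonneg (A - B))).isHermitian
  have hR : (C * Q).PosSemidef := aux_psd hB hC
  set R := C * Q with hRdef
  have hFRF : (F * R * F).PosSemidef := by
    have := hR.mul_mul_conjTranspose_same F
    rwa [hFH] at this
  have hS : (1 + F * R * F).PosSemidef := Matrix.PosSemidef.one.add hFRF
  set S := 1 + F * R * F with hSdef
  have hPx : P * (1 + A * C) = 1 := Matrix.nonsing_inv_mul _ hdA
  have hQx : Q * (1 + B * C) = 1 := Matrix.nonsing_inv_mul _ hdB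
  have hxQ : (1 + B * C) * Q = 1 := Matrix.mul_nonsing_inv _ hdB
  have hxQ' : (1 + C * B) * Q' = 1 := Matrix.mul_nonsing_inv _ hdCB
  have hQBQ' : Q * B = B * Q' := by
    calc Q * B = Q * B * ((1 + C * B) * Q') := by rw [hxQ', mul_one]
      _ = Q * (B * (1 + C * B)) * Q' := by simp only [mul_assoc]
      _ = Q * ((1 + B * C) * B) * Q' := by rw [← ring6 B C]
      _ = (Q * (1 + B * C)) * B * Q' := by simp only [mul_assoc]
      _ = B * Q' := by rw [hQx, one_mul]
  have step1 : P * A - Q * B = P * (A - B) * Q' := by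
    have e1 : P * (A * (1 + C * B)) * Q' = P * A := by
      calc P * (A * (1 + C * B)) * Q' = P * (A * ((1 + C * B) * Q')) := by
            simp only [mul_assoc]
        _ = P * A := by rw [hxQ', mul_one]
    have e2 : P * ((1 + A * C) * B) * Q' = Q * B := by
      calc P * ((1 + A * C) * B) * Q' = (P * (1 + A * C)) * (B * Q') := by
            simp only [mul_assoc]
        _ = B * Q' := by rw [hPx, one_mul]
        _ = Q * B := hQBQ'.symm
    calc P * A - Q * B
        = P * (A * (1 + C * B)) * Q' - P * ((1 + A * C) * B) * Q' := by rw [e1, e2]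
      _ = P * (A - B) * Q' := ring5 P A B C Q'
  have step2 : Q = P + P * ((A - B) * C) * Q := by
    have h : (A - B) * C = (1 + A * C) - (1 + B * C) := by noncomm_ring
    have expand : P * ((A - B) * C) * Q = P * ((1 + A * C) * Q) - P * ((1 + B * C) * Q) := by
      rw [h]
      exact ring4 P _ _ Q
    have e3 : P * ((1 + A * C) * Q) = Q := by
      rw [← mul_assoc, hPx, one_mul]
    rw [expand, e3, hxQ, mul_one]
    abel
  have key : Q * F = P * F * S := by
    calc Q * F = (P + P * ((A - B) * C) * Q) * F := by rw [← step2]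
      _ = (P + P * (F * F * C) * Q) * F := by rw [hFF]
      _ = P * F * (1 + F * (C * Q) * F) := ring3 P F C Q
      _ = P * F * S := rfl
  have hQ'Q : Q' = Qᴴ := by
    rw [hQ, hQ', Matrix.conjTranspose_nonsing_inv]
    congr 1
    simp [conjTranspose_add, conjTranspose_mul, hB.isHermitian.eq, hC.isHermitian.eq]
  have final : P * A - Q * B = (P * F) * S * (P * F)ᴴ := by
    calc P * A - Q * B = P * (A - B) * Q' := step1
      _ = P * (F * F) * Qᴴ := by rw [hFF, hQ'Q]
      _ = (P * F) * (Q * F)ᴴ := by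
          simp only [conjTranspose_mul, hFH, mul_assoc]
      _ = (P * F) * (P * F * S)ᴴ := by rw [key]
      _ = (P * F) * S * (P * F)ᴴ := by
          rw [conjTranspose_mul, hS.isHermitian.eq]
          simp only [mul_assoc]
  rw [final]
  exact hS.mul_mul_conjTranspose_same (P * F)
end

section
/- Let A be an n×n complex matrix, G, H n×n positive semidefinite matrices, and define R_d(X) = H + A* X (I + GX)⁻¹ A for X positive semidefinite. Then R_d is order preserving on positive semidefinite matrices: if X ≥ Y ≥ 0 then R_d(X) ≥ R_d(Y). -/
open Matrix ComplexOrder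

lemma aux_ring {R : Type*} [Ring R] (x y k p q : R)
    (h1 : p*(k*(x*k)) = 1 - p) (h2 : k*(x*(k*p)) = 1 - p)
    (h3 : q*(k*(y*k)) = 1 - q) (h4 : k*(y*(k*q)) = 1 - q) :
    (1 - x*(k*(p*k)))*((x-y)*(1 - k*(p*(k*x)))) +
      (x*(k*p) - y*(k*q))*((1+k*(y*k))*(p*(k*x) - q*(k*y))) =
      (x - x*(k*(p*(k*x)))) - (y - y*(k*(q*(k*y)))) := by
  have h1' : ∀ r : R, p*(k*(x*(k*r))) = r - p*r := fun r => by
    have := congrArg (· * r) h1; simpa [mul_assoc, sub_mul] using this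
  have h2' : ∀ r : R, k*(x*(k*(p*r))) = r - p*r := fun r => by
    have := congrArg (· * r) h2; simpa [mul_assoc, sub_mul] using this
  have h3' : ∀ r : R, q*(k*(y*(k*r))) = r - q*r := fun r => by
    have := congrArg (· * r) h3; simpa [mul_assoc, sub_mul] using this
  have h4' : ∀ r : R, k*(y*(k*(q*r))) = r - q*r := fun r => by
    have := congrArg (· * r) h4; simpa [mul_assoc, sub_mul] using this
  simp only [mul_add, add_mul, mul_sub, sub_mul, mul_one, one_mul, mul_assoc,
    h1', h2', h3', h4', h1, h2, h3, h4]
  abel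

lemma aux_inv {R : Type*} [Ring R] (x k p : R)
    (h2 : k*(x*(k*p)) = 1 - p) :
    (1 + k*k*x) * (1 - k*(p*(k*x))) = 1 := by
  have h2' : ∀ r : R, k*(x*(k*(p*r))) = r - p*r := fun r => by
    have := congrArg (· * r) h2; simpa [mul_assoc, sub_mul] using this
  simp only [mul_add, add_mul, mul_sub, sub_mul, mul_one, one_mul, mul_assoc, h2']
  abel

theorem stmt_1 (n : ℕ) (A G H X Y : Matrix (Fin n) (Fin n) ℂ)
    (hG : G.PosSemidef) (hH : H.PosSemidef)
    (hX : X.PosSemidef) (hY : Y.PosSemidef)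
    (hXY : (X - Y).PosSemidef) :
    ((H + Aᴴ * X * (1 + G * X)⁻¹ * A) - (H + Aᴴ * Y * (1 + G * Y)⁻¹ * A)).PosSemidef := by
  set K := (open scoped MatrixOrder in CFC.sqrt G) with hKdef
  have hK : K.PosSemidef := (open scoped MatrixOrder in (CFC.sqrt_nonneg G).posSemidef)
  have hKh : Kᴴ = K := hK.1
  have hXh : Xᴴ = X := hX.1
  have hYh : Yᴴ = Y := hY.1
  have hKK : K * K = G := (open scoped MatrixOrder in CFC.sqrt_mul_sqrt_self G hG.nonneg)
  -- M_X and M_Y are positive definite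
  have hKXK : (K*(X*K)).PosSemidef := by
    have := hX.conjTranspose_mul_mul_same K
    rwa [hKh, mul_assoc] at this
  have hKYK : (K*(Y*K)).PosSemidef := by
    have := hY.conjTranspose_mul_mul_same K
    rwa [hKh, mul_assoc] at this
  have hMX : (1 + K*(X*K)).PosDef := Matrix.PosDef.add_posSemidef Matrix.PosDef.one hKXK
  have hMY : (1 + K*(Y*K)).PosDef := Matrix.PosDef.add_posSemidef Matrix.PosDef.one hKYK
  set P := (1 + K*(X*K))⁻¹ with hPdef
  set Q := (1 + K*(Y*K))⁻¹ with hQdef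
  have hMXd : IsUnit (1 + K*(X*K)).det := (Matrix.isUnit_iff_isUnit_det _).mp hMX.isUnit
  have hMYd : IsUnit (1 + K*(Y*K)).det := (Matrix.isUnit_iff_isUnit_det _).mp hMY.isUnit
  have hPM : P * (1 + K*(X*K)) = 1 := Matrix.nonsing_inv_mul _ hMXd
  have hMP : (1 + K*(X*K)) * P = 1 := Matrix.mul_nonsing_inv _ hMXd
  have hQM : Q * (1 + K*(Y*K)) = 1 := Matrix.nonsing_inv_mul _ hMYd
  have hMQ : (1 + K*(Y*K)) * Q = 1 := Matrix.mul_nonsing_inv _ hMYd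
  have hMXh : (1 + K*(X*K))ᴴ = 1 + K*(X*K) := by
    simp [conjTranspose_add, conjTranspose_mul, hKh, hXh, mul_assoc]
  have hMYh : (1 + K*(Y*K))ᴴ = 1 + K*(Y*K) := by
    simp [conjTranspose_add, conjTranspose_mul, hKh, hYh, mul_assoc]
  have hPh : Pᴴ = P := by rw [hPdef, Matrix.conjTranspose_nonsing_inv, hMXh]
  have hQh : Qᴴ = Q := by rw [hQdef, Matrix.conjTranspose_nonsing_inv, hMYh]
  have h1 : P*(K*(X*K)) = 1 - P := by
    rw [eq_sub_iff_add_eq, ← hPM]; noncomm_ring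
  have h2 : K*(X*(K*P)) = 1 - P := by
    rw [eq_sub_iff_add_eq, ← hMP]; noncomm_ring
  have h3 : Q*(K*(Y*K)) = 1 - Q := by
    rw [eq_sub_iff_add_eq, ← hQM]; noncomm_ring
  have h4 : K*(Y*(K*Q)) = 1 - Q := by
    rw [eq_sub_iff_add_eq, ← hMQ]; noncomm_ring
  have hinvX : (1 + G * X)⁻¹ = 1 - K*(P*(K*X)) := by
    apply Matrix.inv_eq_right_inv
    rw [← hKK]
    exact aux_inv X K P h2
  have hinvY : (1 + G * Y)⁻¹ = 1 - K*(Q*(K*Y)) := by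
    apply Matrix.inv_eq_right_inv
    rw [← hKK]
    exact aux_inv Y K Q h4
  have hC1 : (1 - K*(P*(K*X)))ᴴ = 1 - X*(K*(P*K)) := by
    simp [conjTranspose_sub, conjTranspose_mul, hKh, hPh, hXh, mul_assoc]
  have hC2 : (P*(K*X) - Q*(K*Y))ᴴ = X*(K*P) - Y*(K*Q) := by
    simp [conjTranspose_sub, conjTranspose_mul, hKh, hPh, hQh, hXh, hYh, mul_assoc]
  have hT1 : ((1 - X*(K*(P*K)))*((X-Y)*(1 - K*(P*(K*X))))).PosSemidef := by
    have h := hXY.conjTranspose_mul_mul_same (1 - K*(P*(K*X)))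
    have e : (1 - K*(P*(K*X)))ᴴ * (X-Y) * (1 - K*(P*(K*X)))
        = (1 - X*(K*(P*K)))*((X-Y)*(1 - K*(P*(K*X)))) := by
      rw [hC1]; noncomm_ring
    rwa [e] at h
  have hT2 : ((X*(K*P) - Y*(K*Q))*((1+K*(Y*K))*(P*(K*X) - Q*(K*Y)))).PosSemidef := by
    have h := hMY.posSemidef.conjTranspose_mul_mul_same (P*(K*X) - Q*(K*Y))
    have e : (P*(K*X) - Q*(K*Y))ᴴ * (1 + K*(Y*K)) * (P*(K*X) - Q*(K*Y))
        = (X*(K*P) - Y*(K*Q))*((1+K*(Y*K))*(P*(K*X) - Q*(K*Y))) := by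
      rw [hC2]; noncomm_ring
    rwa [e] at h
  have key : (H + Aᴴ * X * (1 + G * X)⁻¹ * A) - (H + Aᴴ * Y * (1 + G * Y)⁻¹ * A)
      = Aᴴ * ((1 - X*(K*(P*K)))*((X-Y)*(1 - K*(P*(K*X)))) +
          (X*(K*P) - Y*(K*Q))*((1+K*(Y*K))*(P*(K*X) - Q*(K*Y)))) * A := by
    rw [hinvX, hinvY, aux_ring X Y K P Q h1 h2 h3 h4]
    noncomm_ring
  rw [key]
  exact (hT1.add hT2).conjTranspose_mul_mul_same A
end

section
/- Let F : H_n → H_n be an order-preserving map on n×n Hermitian matrices, continuous on the order interval [X̂₂, X̂₁], where X̂₁ ≥ F(X̂₁), X̂₂ ≤ F(X̂₂), and X̂₁ ≥ X̂₂. Then F maps [X̂₂, X̂₁] into itself and F has a fixed point in [X̂₂, X̂₁]. -/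
open Matrix ComplexOrder Filter Topology

private lemma entry_eq_quadform (n : ℕ) (M : Matrix (Fin n) (Fin n) ℂ) (i j : Fin n) :
    M i j = star (Pi.single i 1 : Fin n → ℂ) ⬝ᵥ (M *ᵥ Pi.single j 1) := by
  have : star (Pi.single i 1 : Fin n → ℂ) = Pi.single i 1 := by
    ext k; simp [Pi.single_apply, apply_ite]
  rw [this, mulVec_single]
  simp [single_dotProduct]

private lemma polarization (n : ℕ) (M : Matrix (Fin n) (Fin n) ℂ) (x y : Fin n → ℂ) :
    star x ⬝ᵥ (M *ᵥ y) =
      ((star (x+y) ⬝ᵥ (M *ᵥ (x+y)) - star x ⬝ᵥ (M *ᵥ x) - star y ⬝ᵥ (M *ᵥ y))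
        - Complex.I * (star (x + Complex.I • y) ⬝ᵥ (M *ᵥ (x + Complex.I • y))
          - star x ⬝ᵥ (M *ᵥ x) - star y ⬝ᵥ (M *ᵥ y))) / 2 := by
  simp only [star_add, star_smul, mulVec_add, mulVec_smul, dotProduct_add, add_dotProduct,
    smul_dotProduct, dotProduct_smul, smul_eq_mul, Complex.star_def, Complex.conj_I,
    RCLike.star_def]
  linear_combination
    ((star x ⬝ᵥ M *ᵥ y - star y ⬝ᵥ M *ᵥ x - star y ⬝ᵥ M *ᵥ y * Complex.I)/2) * Complex.I_sq

private lemma complex_mono_tendsto {f : ℕ → ℂ} {B : ℂ}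
    (hm : Monotone f) (hb : ∀ k, f k ≤ B) :
    ∃ L, Filter.Tendsto f Filter.atTop (nhds L) := by
  have him : ∀ k, (f k).im = (f 0).im := fun k =>
    ((Complex.le_def.mp (hm (Nat.zero_le k))).2).symm
  have hmr : Monotone fun k => (f k).re := fun a b hab => (Complex.le_def.mp (hm hab)).1
  have hbr : BddAbove (Set.range fun k => (f k).re) :=
    ⟨B.re, by rintro _ ⟨k, rfl⟩; exact (Complex.le_def.mp (hb k)).1⟩
  refine ⟨((⨆ k, (f k).re : ℝ) : ℂ) + (f 0).im * Complex.I, ?_⟩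
  have h1 : Tendsto (fun k => ((f k).re : ℝ)) atTop (𝓝 (⨆ k, (f k).re)) :=
    tendsto_atTop_ciSup hmr hbr
  have h2 : Tendsto (fun k => (((f k).re : ℝ) : ℂ) + (f 0).im * Complex.I) atTop
      (𝓝 (((⨆ k, (f k).re : ℝ) : ℂ) + (f 0).im * Complex.I)) :=
    ((Complex.continuous_ofReal.tendsto _).comp h1).add tendsto_const_nhds
  refine h2.congr fun k => ?_
  rw [← him k, Complex.re_add_im]

theorem stmt_3 (n : ℕ) (F : Matrix (Fin n) (Fin n) ℂ → Matrix (Fin n) (Fin n) ℂ)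
    (X₁ X₂ : Matrix (Fin n) (Fin n) ℂ)
    (hX₁ : X₁.IsHermitian) (hX₂ : X₂.IsHermitian)
    (hherm : ∀ X : Matrix (Fin n) (Fin n) ℂ, X.IsHermitian → (F X).IsHermitian)
    (hmono : ∀ X Y : Matrix (Fin n) (Fin n) ℂ, X.IsHermitian → Y.IsHermitian →
      (X - Y).PosSemidef → (F X - F Y).PosSemidef)
    (hcont : ContinuousOn F
      {C | C.IsHermitian ∧ (X₁ - C).PosSemidef ∧ (C - X₂).PosSemidef})
    (h₁ : (X₁ - F X₁).PosSemidef) (h₂ : (F X₂ - X₂).PosSemidef)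
    (h₁₂ : (X₁ - X₂).PosSemidef) :
    (∀ C : Matrix (Fin n) (Fin n) ℂ,
      C.IsHermitian → (X₁ - C).PosSemidef → (C - X₂).PosSemidef →
        (X₁ - F C).PosSemidef ∧ (F C - X₂).PosSemidef) ∧
    ∃ X : Matrix (Fin n) (Fin n) ℂ, X.IsHermitian ∧
      (X₁ - X).PosSemidef ∧ (X - X₂).PosSemidef ∧ F X = X := by
  -- The mapping property
  have key : ∀ C : Matrix (Fin n) (Fin n) ℂ,
      C.IsHermitian → (X₁ - C).PosSemidef → (C - X₂).PosSemidef →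
        (X₁ - F C).PosSemidef ∧ (F C - X₂).PosSemidef := by
    intro C hC h1C h2C
    constructor
    · have hm := hmono X₁ C hX₁ hC h1C
      have := h₁.add hm
      rwa [sub_add_sub_cancel] at this
    · have hm := hmono C X₂ hC hX₂ h2C
      have := hm.add h₂
      rwa [sub_add_sub_cancel] at this
  refine ⟨key, ?_⟩
  -- The iteration sequence
  set S : ℕ → Matrix (Fin n) (Fin n) ℂ := fun k => F^[k] X₂ with hS
  have hS0 : S 0 = X₂ := rfl
  have hSsucc : ∀ k, S (k + 1) = F (S k) := fun k => Function.iterate_succ_apply' F k X₂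
  -- invariants
  have hinv : ∀ k, (S k).IsHermitian ∧ (X₁ - S k).PosSemidef ∧ (S k - X₂).PosSemidef := by
    intro k
    induction k with
    | zero =>
      refine ⟨hX₂, h₁₂, ?_⟩
      rw [hS0, sub_self]
      exact Matrix.PosSemidef.zero
    | succ k ih =>
      obtain ⟨hH, h1, h2⟩ := ih
      obtain ⟨k1, k2⟩ := key (S k) hH h1 h2
      exact ⟨by rw [hSsucc]; exact hherm _ hH, by rwa [hSsucc], by rwa [hSsucc]⟩
  -- monotone steps
  have hstep : ∀ k, (S (k + 1) - S k).PosSemidef := by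
    intro k
    induction k with
    | zero => simpa [hSsucc, hS0] using h₂
    | succ k ih =>
      have h := hmono (S (k+1)) (S k) (hinv (k+1)).1 (hinv k).1 ih
      rw [← hSsucc, ← hSsucc] at h
      exact h
  have hmonoS : ∀ a b, a ≤ b → (S b - S a).PosSemidef := by
    intro a b hab
    induction b, hab using Nat.le_induction with
    | base =>
      rw [sub_self]
      exact Matrix.PosSemidef.zero
    | succ b hab ih =>
      have := (hstep b).add ih
      rwa [sub_add_sub_cancel] at this
  -- quadratic forms converge
  have hq : ∀ x : Fin n → ℂ, ∃ L,
      Tendsto (fun k => star x ⬝ᵥ (S k *ᵥ x)) atTop (𝓝 L) := by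
    intro x
    apply complex_mono_tendsto (B := star x ⬝ᵥ (X₁ *ᵥ x))
    · intro a b hab
      have h := (hmonoS a b hab).dotProduct_mulVec_nonneg x
      rw [sub_mulVec, dotProduct_sub] at h
      exact sub_nonneg.mp h
    · intro k
      have h := (hinv k).2.1.dotProduct_mulVec_nonneg x
      rw [sub_mulVec, dotProduct_sub] at h
      exact sub_nonneg.mp h
  choose p hp using hq
  -- the limit matrix
  set e : Fin n → (Fin n → ℂ) := fun i => Pi.single i 1 with he
  set A : Matrix (Fin n) (Fin n) ℂ := Matrix.of fun i j =>
    ((p (e i + e j) - p (e i) - p (e j))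
      - Complex.I * (p (e i + Complex.I • e j) - p (e i) - p (e j))) / 2 with hA
  -- S tends to A
  have hSA : Tendsto S atTop (𝓝 A) := by
    refine tendsto_pi_nhds.mpr ?_
    intro i
    refine tendsto_pi_nhds.mpr ?_
    intro j
    have heq : ∀ k, S k i j =
        ((star (e i + e j) ⬝ᵥ (S k *ᵥ (e i + e j)) - star (e i) ⬝ᵥ (S k *ᵥ e i)
          - star (e j) ⬝ᵥ (S k *ᵥ e j))
          - Complex.I * (star (e i + Complex.I • e j) ⬝ᵥ (S k *ᵥ (e i + Complex.I • e j))
            - star (e i) ⬝ᵥ (S k *ᵥ e i) - star (e j) ⬝ᵥ (S k *ᵥ e j))) / 2 := by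
      intro k
      rw [entry_eq_quadform n (S k) i j]
      exact polarization n (S k) (e i) (e j)
    have hT : Tendsto (fun k =>
        ((star (e i + e j) ⬝ᵥ (S k *ᵥ (e i + e j)) - star (e i) ⬝ᵥ (S k *ᵥ e i)
          - star (e j) ⬝ᵥ (S k *ᵥ e j))
          - Complex.I * (star (e i + Complex.I • e j) ⬝ᵥ (S k *ᵥ (e i + Complex.I • e j))
            - star (e i) ⬝ᵥ (S k *ᵥ e i) - star (e j) ⬝ᵥ (S k *ᵥ e j))) / 2) atTop
        (𝓝 (A i j)) := by
      rw [hA]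
      exact ((((hp (e i + e j)).sub (hp (e i))).sub (hp (e j))).sub
        ((((hp (e i + Complex.I • e j)).sub (hp (e i))).sub (hp (e j))).const_mul
          Complex.I)).div_const 2
    exact hT.congr fun k => (heq k).symm
  -- A is Hermitian
  have hAH : A.IsHermitian := by
    have h1 : Tendsto (fun k => (S k)ᴴ) atTop (𝓝 Aᴴ) :=
      (continuous_id.matrix_conjTranspose.tendsto A).comp hSA
    have h2 : Tendsto (fun k => (S k)ᴴ) atTop (𝓝 A) :=
      hSA.congr fun k => ((hinv k).1).symm
    exact tendsto_nhds_unique h1 h2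
  -- quadratic form continuity
  have hqf : ∀ x : Fin n → ℂ, Continuous fun M : Matrix (Fin n) (Fin n) ℂ =>
      star x ⬝ᵥ (M *ᵥ x) :=
    fun x => continuous_const.dotProduct (continuous_id.matrix_mulVec continuous_const)
  -- A is in the interval
  have hA1 : (X₁ - A).PosSemidef := by
    refine .of_dotProduct_mulVec_nonneg (hX₁.sub hAH) fun x => ?_
    have hT : Tendsto (fun k => star x ⬝ᵥ ((X₁ - S k) *ᵥ x)) atTop
        (𝓝 (star x ⬝ᵥ ((X₁ - A) *ᵥ x))) :=
      ((hqf x).tendsto (X₁ - A)).comp ((tendsto_const_nhds.sub hSA))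
    exact ge_of_tendsto hT (Eventually.of_forall fun k => (hinv k).2.1.dotProduct_mulVec_nonneg x)
  have hA2 : (A - X₂).PosSemidef := by
    refine .of_dotProduct_mulVec_nonneg (hAH.sub hX₂) fun x => ?_
    have hT : Tendsto (fun k => star x ⬝ᵥ ((S k - X₂) *ᵥ x)) atTop
        (𝓝 (star x ⬝ᵥ ((A - X₂) *ᵥ x))) :=
      ((hqf x).tendsto (A - X₂)).comp ((hSA.sub tendsto_const_nhds))
    exact ge_of_tendsto hT (Eventually.of_forall fun k => (hinv k).2.2.dotProduct_mulVec_nonneg x)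
  -- fixed point
  have hmem : ∀ k, S k ∈ {C : Matrix (Fin n) (Fin n) ℂ |
      C.IsHermitian ∧ (X₁ - C).PosSemidef ∧ (C - X₂).PosSemidef} := fun k => hinv k
  have hAmem : A ∈ {C : Matrix (Fin n) (Fin n) ℂ |
      C.IsHermitian ∧ (X₁ - C).PosSemidef ∧ (C - X₂).PosSemidef} := ⟨hAH, hA1, hA2⟩
  have hSAin : Tendsto S atTop (𝓝[{C : Matrix (Fin n) (Fin n) ℂ |
      C.IsHermitian ∧ (X₁ - C).PosSemidef ∧ (C - X₂).PosSemidef}] A) :=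
    tendsto_nhdsWithin_of_tendsto_nhds_of_eventually_within S hSA
      (Eventually.of_forall hmem)
  have hFS : Tendsto (fun k => F (S k)) atTop (𝓝 (F A)) :=
    (hcont A hAmem).tendsto.comp hSAin
  have hshift : Tendsto (fun k => S (k + 1)) atTop (𝓝 A) :=
    (Filter.tendsto_add_atTop_iff_nat 1).mpr hSA
  have hFS' : Tendsto (fun k => S (k + 1)) atTop (𝓝 (F A)) :=
    hFS.congr fun k => (hSsucc k).symm
  have hFA : F A = A := tendsto_nhds_unique hFS' hshift
  exact ⟨A, hAH, hA1, hA2, hFA⟩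
end

section
/- Let A be an n×n complex matrix and Q a positive definite Hermitian matrix with Q − A*QA positive semidefinite. If there exists a positive definite Hermitian X solving X + A*XA = Q, then ρ(A) ≤ 1 and all unimodular eigenvalues of A are semisimple. If moreover Q − A*QA is positive definite, then ρ(A) < 1. -/
open Matrix ComplexOrder

private theorem quadKey10 {n : ℕ} (N : Matrix (Fin n) (Fin n) ℂ) (x y : Fin n → ℂ) :
    star x ⬝ᵥ (Nᴴ *ᵥ y) = star (N *ᵥ x) ⬝ᵥ y := by
  rw [dotProduct_mulVec, ← star_mulVec]

private theorem quadSub10 {n : ℕ} (M N : Matrix (Fin n) (Fin n) ℂ) (x : Fin n → ℂ) :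
    star x ⬝ᵥ ((M - Nᴴ * M * N) *ᵥ x)
      = star x ⬝ᵥ (M *ᵥ x) - star (N *ᵥ x) ⬝ᵥ (M *ᵥ (N *ᵥ x)) := by
  rw [sub_mulVec, dotProduct_sub, Matrix.mul_assoc, ← mulVec_mulVec, quadKey10,
    mulVec_mulVec, ← mulVec_mulVec]

private theorem eigOfMem10 {n : ℕ} (A : Matrix (Fin n) (Fin n) ℂ) (μ : ℂ)
    (h : μ ∈ spectrum ℂ A) : ∃ v : Fin n → ℂ, v ≠ 0 ∧ A *ᵥ v = μ • v := by
  rw [spectrum.mem_iff] at h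
  have hdet : (μ • (1 : Matrix (Fin n) (Fin n) ℂ) - A).det = 0 := by
    by_contra hd
    exact h (by
      have : IsUnit (μ • (1 : Matrix (Fin n) (Fin n) ℂ) - A) :=
        (Matrix.isUnit_iff_isUnit_det _).2 (isUnit_iff_ne_zero.2 hd)
      simpa [Algebra.algebraMap_eq_smul_one] using this)
  obtain ⟨v, hv, hv0⟩ := Matrix.exists_mulVec_eq_zero_iff.2 hdet
  refine ⟨v, hv, ?_⟩
  rw [sub_mulVec, sub_eq_zero] at hv0
  simpa [smul_mulVec] using hv0.symm

private theorem steinEig10 {n : ℕ} (A M : Matrix (Fin n) (Fin n) ℂ)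
    (μ : ℂ) (v : Fin n → ℂ) (hAv : A *ᵥ v = μ • v) :
    star v ⬝ᵥ ((M - Aᴴ * M * A) *ᵥ v)
      = ((1 - ‖μ‖^2 : ℝ) : ℂ) * (star v ⬝ᵥ (M *ᵥ v)) := by
  have hc : star μ * μ = ((‖μ‖^2 : ℝ) : ℂ) := by
    rw [Complex.star_def, mul_comm, Complex.mul_conj]
    norm_cast
    simp [Complex.normSq_eq_norm_sq]
  rw [quadSub10, hAv, star_smul, smul_dotProduct, mulVec_smul, dotProduct_smul,
    smul_smul, smul_eq_mul, hc]
  push_cast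
  ring

theorem stmt_10 (n : ℕ) (A Q X : Matrix (Fin n) (Fin n) ℂ)
    (hQ : Q.PosDef) (hQA : (Q - Aᴴ * Q * A).PosSemidef)
    (hX : X.PosDef) (heq : X + Aᴴ * X * A = Q) :
    (∀ μ ∈ spectrum ℂ A, ‖μ‖ ≤ 1) ∧
    (∀ μ ∈ spectrum ℂ A, ‖μ‖ = 1 →
      ∀ v : Fin n → ℂ, (A - μ • 1) *ᵥ ((A - μ • 1) *ᵥ v) = 0 →
        (A - μ • 1) *ᵥ v = 0) ∧
    ((Q - Aᴴ * Q * A).PosDef → ∀ μ ∈ spectrum ℂ A, ‖μ‖ < 1) := by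
  refine ⟨?_, ?_, ?_⟩
  · -- ρ(A) ≤ 1
    intro μ hμ
    obtain ⟨v, hv, hAv⟩ := eigOfMem10 A μ hμ
    have h1 := hQA.dotProduct_mulVec_nonneg v
    rw [steinEig10 A Q μ v hAv] at h1
    have h2 := hQ.dotProduct_mulVec_pos hv
    rw [Complex.lt_def] at h2
    rw [Complex.le_def] at h1
    have h3 : 0 ≤ (1 - ‖μ‖^2) * (star v ⬝ᵥ (Q *ᵥ v)).re := by
      have := h1.1
      rwa [Complex.zero_re, Complex.re_ofReal_mul] at this
    have h2' : (0:ℝ) < (star v ⬝ᵥ (Q *ᵥ v)).re := by simpa using h2.1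
    have h4 : 0 ≤ 1 - ‖μ‖^2 :=
      nonneg_of_mul_nonneg_right (by linarith [mul_comm (1-‖μ‖^2) ((star v ⬝ᵥ (Q *ᵥ v)).re)]) h2'
    nlinarith [norm_nonneg μ]
  · -- semisimplicity of unimodular eigenvalues
    intro μ _ hnorm v hv2
    by_contra hw'
    set w := (A - μ • 1) *ᵥ v with hwdef
    have hwne : w ≠ 0 := hw'
    have hAw : A *ᵥ w = μ • w := by
      rw [sub_mulVec, smul_mulVec, one_mulVec, sub_eq_zero] at hv2
      exact hv2
    have hAv : A *ᵥ v = μ • v + w := by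
      rw [hwdef, sub_mulVec, smul_mulVec, one_mulVec]
      abel
    have hμ0 : μ ≠ 0 := by
      intro h; rw [h] at hnorm; simp at hnorm
    have hnsq : star μ * μ = 1 := by
      rw [Complex.star_def, mul_comm, Complex.mul_conj]
      norm_cast
      simp [Complex.normSq_eq_norm_sq, hnorm]
    -- Stein identity for A²
    have hS : X - (A*A)ᴴ * X * (A*A) = Q - Aᴴ * Q * A := by
      rw [← heq]
      simp only [conjTranspose_mul, Matrix.mul_add, Matrix.add_mul, Matrix.mul_assoc]
      abel
    have hSpos : (X - (A*A)ᴴ * X * (A*A)).PosSemidef := hS ▸ hQA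
    have hstep0 : ∀ x : Fin n → ℂ,
        star ((A*A) *ᵥ x) ⬝ᵥ (X *ᵥ ((A*A) *ᵥ x)) ≤ star x ⬝ᵥ (X *ᵥ x) := by
      intro x
      have h1 := hSpos.dotProduct_mulVec_nonneg x
      rw [quadSub10] at h1
      exact sub_nonneg.mp h1
    have hBact : ∀ c : ℂ, (A*A) *ᵥ (v + c • w) = (μ*μ) • (v + (c + 2*μ⁻¹) • w) := by
      intro c
      have key : (μ*μ) * (c + 2*μ⁻¹) = μ*μ*c + 2*μ := by field_simp
      rw [smul_add, smul_smul, key, ← mulVec_mulVec]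
      simp only [mulVec_add, mulVec_smul, hAv, hAw]
      module
    have hscale : ∀ y : Fin n → ℂ,
        star ((μ*μ) • y) ⬝ᵥ (X *ᵥ ((μ*μ) • y)) = star y ⬝ᵥ (X *ᵥ y) := by
      intro y
      rw [star_smul, smul_dotProduct, mulVec_smul, dotProduct_smul, smul_smul, smul_eq_mul]
      rw [show star (μ*μ) * (μ*μ) = (star μ * μ) * (star μ * μ) by rw [star_mul']; ring]
      rw [hnsq]; ring
    set g : ℂ → ℂ := fun c => star (v + c • w) ⬝ᵥ (X *ᵥ (v + c • w)) with hg
    have hstep : ∀ c : ℂ, g (c + 2*μ⁻¹) ≤ g c := by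
      intro c
      have h := hstep0 (v + c • w)
      rwa [hBact c, hscale] at h
    have hchain : ∀ k : ℕ, g ((2 * (k:ℂ)) * μ⁻¹) ≤ g 0 := by
      intro k
      induction k with
      | zero => simp
      | succ k ih =>
        have hrec : (2 * ((k+1 : ℕ):ℂ)) * μ⁻¹ = (2 * (k:ℂ)) * μ⁻¹ + 2*μ⁻¹ := by
          push_cast; ring
        rw [hrec]
        exact le_trans (hstep _) ih
    have hexp : ∀ c : ℂ, g c
        = star v ⬝ᵥ (X *ᵥ v) + (starRingEnd ℂ) c * (star w ⬝ᵥ (X *ᵥ v))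
          + c * (star v ⬝ᵥ (X *ᵥ w)) + (starRingEnd ℂ) c * c * (star w ⬝ᵥ (X *ᵥ w)) := by
      intro c
      simp only [hg]
      simp [star_add, star_smul, mulVec_add, mulVec_smul, dotProduct_add, add_dotProduct,
        smul_dotProduct, dotProduct_smul, smul_eq_mul]
      ring
    set b1 := star w ⬝ᵥ (X *ᵥ v) with hb1
    set b2 := star v ⬝ᵥ (X *ᵥ w) with hb2
    have hqw := hX.dotProduct_mulVec_pos hwne
    rw [Complex.lt_def] at hqw
    set rw0 : ℝ := (star w ⬝ᵥ (X *ᵥ w)).re with hrw0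
    have hrwpos : 0 < rw0 := by simpa using hqw.1
    obtain ⟨k, hk⟩ := exists_nat_gt ((‖b1‖ + ‖b2‖) / (2 * rw0))
    have hkpos : 0 < (k:ℝ) :=
      lt_of_le_of_lt (div_nonneg (by positivity) (by positivity)) hk
    have hk2 : ‖b1‖ + ‖b2‖ < 2 * k * rw0 := by
      rw [div_lt_iff₀ (by positivity)] at hk
      nlinarith
    set c : ℂ := (2 * (k:ℂ)) * μ⁻¹ with hc
    have hccbar : (starRingEnd ℂ) c * c = ((4 * (k:ℝ) * k : ℝ) : ℂ) := by
      have h1 : (starRingEnd ℂ) c = (2 * (k:ℂ)) * (star μ)⁻¹ := by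
        rw [hc, Complex.star_def, _root_.map_mul, _root_.map_mul, map_inv₀,
          Complex.conj_natCast, map_ofNat]
      rw [h1, hc]
      have h2 : (star μ)⁻¹ * μ⁻¹ = (star μ * μ)⁻¹ := (mul_inv _ _).symm
      push_cast
      calc (2 * (k:ℂ)) * (star μ)⁻¹ * ((2 * (k:ℂ)) * μ⁻¹)
          = (4 * (k:ℂ) * k) * ((star μ)⁻¹ * μ⁻¹) := by ring
        _ = 4 * (k:ℂ) * k := by rw [h2, hnsq]; simp
    have hnormc : ‖c‖ = 2 * k := by
      rw [hc]; simp [norm_mul, norm_inv, hnorm]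
    have hAch := hchain k
    rw [← hc, Complex.le_def] at hAch
    have hg0 : (g 0).re = (star v ⬝ᵥ (X *ᵥ v)).re := by
      rw [hexp 0]; simp
    have hgc : (g c).re = (star v ⬝ᵥ (X *ᵥ v)).re + ((starRingEnd ℂ) c * b1).re
        + (c * b2).re + 4 * (k:ℝ) * k * rw0 := by
      rw [hexp c, mul_assoc, hccbar]
      simp only [Complex.add_re, Complex.re_ofReal_mul]
      rfl
    have hbd1 : -(‖c‖ * ‖b1‖) ≤ ((starRingEnd ℂ) c * b1).re := by
      have h := neg_abs_le (((starRingEnd ℂ) c * b1).re)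
      have h2 : |((starRingEnd ℂ) c * b1).re| ≤ ‖c‖ * ‖b1‖ := by
        calc |((starRingEnd ℂ) c * b1).re| ≤ ‖(starRingEnd ℂ) c * b1‖ :=
              Complex.abs_re_le_norm _
          _ = ‖c‖ * ‖b1‖ := by rw [norm_mul, RCLike.norm_conj]
      linarith
    have hbd2 : -(‖c‖ * ‖b2‖) ≤ (c * b2).re := by
      have h := neg_abs_le ((c * b2).re)
      have h2 : |(c * b2).re| ≤ ‖c‖ * ‖b2‖ := by
        calc |(c * b2).re| ≤ ‖c * b2‖ := Complex.abs_re_le_norm _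
          _ = ‖c‖ * ‖b2‖ := norm_mul _ _
      linarith
    have hle : (g c).re ≤ (g 0).re := hAch.1
    rw [hgc, hg0, hnormc] at *
    nlinarith [mul_lt_mul_of_pos_left hk2 (by positivity : (0:ℝ) < 2*k)]
  · -- strict
    intro hQAd μ hμ
    obtain ⟨v, hv, hAv⟩ := eigOfMem10 A μ hμ
    have h1 := hQAd.dotProduct_mulVec_pos hv
    rw [steinEig10 A Q μ v hAv] at h1
    have h2 := hQ.dotProduct_mulVec_pos hv
    rw [Complex.lt_def] at h2 h1
    have h3 : 0 < (1 - ‖μ‖^2) * (star v ⬝ᵥ (Q *ᵥ v)).re := by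
      have := h1.1
      rwa [Complex.zero_re, Complex.re_ofReal_mul] at this
    have h2' : (0:ℝ) < (star v ⬝ᵥ (Q *ᵥ v)).re := by simpa using h2.1
    have h4 : 0 < 1 - ‖μ‖^2 := by
      rcases mul_pos_iff.mp h3 with ⟨h, _⟩ | ⟨_, h⟩
      · exact h
      · linarith
    nlinarith [norm_nonneg μ]
end

section
/- Let J = aI_n + N be a single n×n Jordan block with eigenvalue a satisfying |a| > 1 (N the nilpotent shift). If X is positive semidefinite and X − J*XJ is positive semidefinite, then X = 0. -/
open Matrix ComplexOrder

private lemma quad_form (n : ℕ) (M : Matrix (Fin n) (Fin n) ℂ) (k : Fin n) :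
    star (Pi.single k (1:ℂ)) ⬝ᵥ M *ᵥ Pi.single k (1:ℂ) = M k k := by
  have hs : (star (Pi.single k (1:ℂ)) : Fin n → ℂ) = Pi.single k (1:ℂ) := by
    ext i; simp [Pi.single_apply, apply_ite star]
  rw [hs, Matrix.mulVec_single, single_dotProduct]
  simp

theorem stmt_11 (n : ℕ) (a : ℂ) (ha : 1 < ‖a‖)
    (J X : Matrix (Fin n) (Fin n) ℂ)
    (hJ : J = a • (1 : Matrix (Fin n) (Fin n) ℂ) +
      Matrix.of (fun i j : Fin n => if (i : ℕ) + 1 = (j : ℕ) then 1 else 0))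
    (hX : X.PosSemidef) (hS : (X - Jᴴ * X * J).PosSemidef) :
    X = 0 := by
  have hnormsq : 1 < Complex.normSq a := by
    have h1 : 1 < ‖a‖ := by exact ha
    nlinarith [Complex.sq_norm a]
  -- main claim: all columns of X vanish, by strong induction on the index
  have main : ∀ m : ℕ, ∀ hm : m < n, ∀ j, X j ⟨m, hm⟩ = 0 := by
    intro m
    induction m using Nat.strong_induction_on with
    | _ m IH =>
      intro hm j
      set k : Fin n := ⟨m, hm⟩
      -- compute J *ᵥ e k
      have hy : J *ᵥ Pi.single k (1:ℂ) =
          a • (Pi.single k (1:ℂ) : Fin n → ℂ) +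
            (fun i : Fin n => if (i:ℕ) + 1 = m then (1:ℂ) else 0) := by
        subst hJ
        rw [Matrix.add_mulVec, Matrix.smul_mulVec, Matrix.one_mulVec]
        congr 1
        rw [Matrix.mulVec_single]
        ext i
        simp [k]
      -- the quadratic form of Jᴴ * X * J at e k
      have hq : star (Pi.single k (1:ℂ)) ⬝ᵥ (Jᴴ * X * J) *ᵥ Pi.single k (1:ℂ)
          = (starRingEnd ℂ) a * a * X k k := by
        have h1 : (Jᴴ * X * J) *ᵥ Pi.single k (1:ℂ) = Jᴴ *ᵥ (X *ᵥ (J *ᵥ Pi.single k (1:ℂ))) := by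
          rw [← Matrix.mulVec_mulVec, ← Matrix.mulVec_mulVec]
        rw [h1, Matrix.dotProduct_mulVec, ← Matrix.star_mulVec, hy]
        -- X kills the second summand by the induction hypothesis
        have h2 : X *ᵥ (fun i : Fin n => if (i:ℕ) + 1 = m then 1 else 0) = 0 := by
          rcases Nat.eq_zero_or_pos m with h0 | hpos
          · subst h0
            have hz : (fun i : Fin n => if (i:ℕ) + 1 = 0 then (1:ℂ) else 0) = (0 : Fin n → ℂ) := by
              ext i; simp
            rw [hz, Matrix.mulVec_zero]
          · have hm' : m - 1 < n := lt_of_le_of_lt (Nat.sub_le _ _) hm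
            have : (fun i : Fin n => if (i:ℕ) + 1 = m then (1:ℂ) else 0)
                = Pi.single (⟨m - 1, hm'⟩ : Fin n) (1:ℂ) := by
              ext i
              rw [Pi.single_apply]
              congr 1
              simp only [eq_iff_iff, Fin.ext_iff]
              omega
            rw [this, Matrix.mulVec_single]
            ext i
            simp [IH (m-1) (by omega) hm']
        rw [Matrix.mulVec_add, Matrix.mulVec_smul, h2, add_zero]
        rw [star_add, star_smul, add_dotProduct, smul_dotProduct]
        have hs : (star (Pi.single k (1:ℂ)) : Fin n → ℂ) = Pi.single k (1:ℂ) := by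
          ext i; simp [Pi.single_apply, apply_ite star]
        have h3 : star (Pi.single k (1:ℂ)) ⬝ᵥ a • (X *ᵥ Pi.single k (1:ℂ)) = a * X k k := by
          rw [dotProduct_smul, hs, Matrix.mulVec_single, single_dotProduct]
          simp
        have h4 : star (fun i : Fin n => if (i:ℕ) + 1 = m then (1:ℂ) else 0) ⬝ᵥ
            a • (X *ᵥ Pi.single k (1:ℂ)) = 0 := by
          rcases Nat.eq_zero_or_pos m with h0 | hpos
          · subst h0
            have hz : (star (fun i : Fin n => if (i:ℕ) + 1 = 0 then (1:ℂ) else 0) : Fin n → ℂ)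
                = (0 : Fin n → ℂ) := by
              ext i; simp
            rw [hz, zero_dotProduct]
          · have hm' : m - 1 < n := lt_of_le_of_lt (Nat.sub_le _ _) hm
            have : (star (fun i : Fin n => if (i:ℕ) + 1 = m then (1:ℂ) else 0) : Fin n → ℂ)
                = Pi.single (⟨m - 1, hm'⟩ : Fin n) (1:ℂ) := by
              ext i
              simp only [Pi.star_apply, apply_ite star, star_one, star_zero, Pi.single_apply]
              congr 1
              simp only [eq_iff_iff, Fin.ext_iff]
              omega
            have hrow : X ⟨m - 1, hm'⟩ k = 0 := by
              rw [← hX.1.apply ⟨m - 1, hm'⟩ k, IH (m-1) (by omega) hm' k, star_zero]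
            rw [this, single_dotProduct]
            simp [Matrix.mulVec_single, hrow]
        rw [h3, h4, add_zero, smul_eq_mul, Complex.star_def]
        ring
      -- diagonal entry is zero
      have hd1 : 0 ≤ X k k := by
        have := hX.dotProduct_mulVec_nonneg (Pi.single k (1:ℂ))
        rwa [quad_form] at this
      have hd2 : 0 ≤ X k k - (starRingEnd ℂ) a * a * X k k := by
        have := hS.dotProduct_mulVec_nonneg (Pi.single k (1:ℂ))
        rw [quad_form] at this
        rw [Matrix.sub_apply] at this
        have he : (Jᴴ * X * J) k k = (starRingEnd ℂ) a * a * X k k := by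
          rw [← quad_form n (Jᴴ * X * J) k, hq]
        rwa [he] at this
      have hXkk : X k k = 0 := by
        rw [Complex.nonneg_iff] at hd1 hd2
        obtain ⟨hre, him⟩ := hd1
        have hconj : (starRingEnd ℂ) a * a = (Complex.normSq a : ℝ) := by
          rw [Complex.normSq_eq_conj_mul_self]
        rw [hconj] at hd2
        obtain ⟨hre2, -⟩ := hd2
        have : (X k k - (Complex.normSq a : ℂ) * X k k).re
            = (1 - Complex.normSq a) * (X k k).re := by
          simp [Complex.sub_re, Complex.mul_re, ← him]
          ring
        rw [this] at hre2
        have hzero : (X k k).re = 0 := by nlinarith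
        exact Complex.ext hzero him.symm
      -- zero diagonal entry forces the whole column to vanish
      have hcol : X *ᵥ Pi.single k (1:ℂ) = 0 := by
        rw [← hX.dotProduct_mulVec_zero_iff, quad_form, hXkk]
      have := congrFun hcol j
      rw [Matrix.mulVec_single] at this
      simpa using this
  ext i j
  exact (main j.1 j.2 i).trans rfl |>.trans (by simp)
end

section
/- Let J = aI_n + N be a single n×n Jordan block with |a| = 1 (N the nilpotent superdiagonal shift, n ≥ 2). If X is positive semidefinite and X − J*XJ is positive semidefinite, then X − J*XJ = 0 and X = x·e_n e_nᵀ for some real x ≥ 0, where e_n is the last standard basis vector. -/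
open Matrix ComplexOrder

/-- Extension of a matrix to integer indices, zero outside the range. -/
noncomputable def extZ {n : ℕ} (X : Matrix (Fin n) (Fin n) ℂ) (i j : ℤ) : ℂ :=
  if h : 0 ≤ i ∧ i < n ∧ 0 ≤ j ∧ j < n then X ⟨i.toNat, by omega⟩ ⟨j.toNat, by omega⟩ else 0

lemma extZ_out {n : ℕ} (X : Matrix (Fin n) (Fin n) ℂ) {p q : ℤ}
    (h : ¬(0 ≤ p ∧ p < n ∧ 0 ≤ q ∧ q < n)) : extZ X p q = 0 := dif_neg h

lemma extZ_eq {n : ℕ} (X : Matrix (Fin n) (Fin n) ℂ) {p q : ℤ} {i j : Fin n}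
    (h1 : p = (i : ℕ)) (h2 : q = (j : ℕ)) : extZ X p q = X i j := by
  have hi := i.isLt; have hj := j.isLt
  rw [extZ, dif_pos (by omega)]
  congr 1 <;> apply Fin.ext <;> simp <;> omega

lemma extZ_conj {n : ℕ} {X : Matrix (Fin n) (Fin n) ℂ} (hX : X.IsHermitian) (p q : ℤ) :
    extZ X q p = (starRingEnd ℂ) (extZ X p q) := by
  unfold extZ
  by_cases h : 0 ≤ p ∧ p < n ∧ 0 ≤ q ∧ q < n
  · rw [dif_pos ⟨h.2.2.1, h.2.2.2, h.1, h.2.1⟩, dif_pos h]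
    exact (congrFun (congrFun hX _) _).symm
  · rw [dif_neg (by tauto), dif_neg h, map_zero]

lemma psd_col_zero {n : ℕ} {A : Matrix (Fin n) (Fin n) ℂ} (hA : A.PosSemidef)
    {i : Fin n} (h : A i i = 0) : ∀ j, A j i = 0 := by
  intro j
  have h1 : star (Pi.single i 1 : Fin n → ℂ) ⬝ᵥ A *ᵥ (Pi.single i 1) = 0 := by
    simp [mulVec_single, dotProduct, Pi.single_apply, h]
  have h2 := (hA.dotProduct_mulVec_zero_iff (Pi.single i 1)).mp h1
  have := congrFun h2 j
  simpa [mulVec_single] using this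

lemma mulN_apply {n : ℕ} {N : Matrix (Fin n) (Fin n) ℂ}
    (hN : N = Matrix.of (fun i j : Fin n => if (i : ℕ) + 1 = (j : ℕ) then (1:ℂ) else 0))
    (M : Matrix (Fin n) (Fin n) ℂ) (i j : Fin n) :
    (M * N) i j = if hj : (j : ℕ) = 0 then 0 else M i ⟨(j:ℕ) - 1, by omega⟩ := by
  subst hN
  rw [mul_apply]
  split
  · next hj =>
    apply Finset.sum_eq_zero
    intro l _
    simp [hj]
  · next hj =>
    rw [Finset.sum_eq_single (⟨(j:ℕ)-1, by omega⟩ : Fin n)]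
    · have : ((⟨(j:ℕ)-1, by omega⟩ : Fin n) : ℕ) + 1 = (j:ℕ) := by simp; omega
      simp [this]
    · intro l _ hl
      have : ¬ ((l:ℕ) + 1 = (j:ℕ)) := by
        intro hc
        apply hl
        apply Fin.ext
        simp
        omega
      simp [this]
    · intro h; exact absurd (Finset.mem_univ _) h

lemma Nmul_apply {n : ℕ} {N : Matrix (Fin n) (Fin n) ℂ}
    (hN : N = Matrix.of (fun i j : Fin n => if (i : ℕ) + 1 = (j : ℕ) then (1:ℂ) else 0))
    (M : Matrix (Fin n) (Fin n) ℂ) (i j : Fin n) :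
    (Nᴴ * M) i j = if hi : (i : ℕ) = 0 then 0 else M ⟨(i:ℕ) - 1, by omega⟩ j := by
  subst hN
  rw [mul_apply]
  split
  · next hi =>
    apply Finset.sum_eq_zero
    intro l _
    simp [conjTranspose_apply, hi]
  · next hi =>
    rw [Finset.sum_eq_single (⟨(i:ℕ)-1, by omega⟩ : Fin n)]
    · have : ((⟨(i:ℕ)-1, by omega⟩ : Fin n) : ℕ) + 1 = (i:ℕ) := by simp; omega
      simp [conjTranspose_apply, this]
    · intro l _ hl
      have : ¬ ((l:ℕ) + 1 = (i:ℕ)) := by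
        intro hc; apply hl; apply Fin.ext; simp; omega
      simp [conjTranspose_apply, this]
    · intro h; exact absurd (Finset.mem_univ _) h

lemma mulN_extZ {n : ℕ} {N : Matrix (Fin n) (Fin n) ℂ}
    (hN : N = Matrix.of (fun i j : Fin n => if (i : ℕ) + 1 = (j : ℕ) then (1:ℂ) else 0))
    (M : Matrix (Fin n) (Fin n) ℂ) (i j : Fin n) :
    (M * N) i j = extZ M ((i : ℕ) : ℤ) (((j : ℕ) : ℤ) - 1) := by
  rw [mulN_apply hN]
  split
  · next hj => rw [extZ_out M (by omega)]
  · next hj => exact (extZ_eq M rfl (by simp only [Fin.val_mk]; omega)).symm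

lemma Nmul_extZ {n : ℕ} {N : Matrix (Fin n) (Fin n) ℂ}
    (hN : N = Matrix.of (fun i j : Fin n => if (i : ℕ) + 1 = (j : ℕ) then (1:ℂ) else 0))
    (M : Matrix (Fin n) (Fin n) ℂ) (i j : Fin n) :
    (Nᴴ * M) i j = extZ M (((i : ℕ) : ℤ) - 1) ((j : ℕ) : ℤ) := by
  rw [Nmul_apply hN]
  split
  · next hi => rw [extZ_out M (by omega)]
  · next hi => exact (extZ_eq M (by simp only [Fin.val_mk]; omega) rfl).symm

theorem stmt_12 (n : ℕ) (hn : 2 ≤ n) (a : ℂ) (ha : ‖a‖ = 1)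
    (J X : Matrix (Fin n) (Fin n) ℂ)
    (hJ : J = a • (1 : Matrix (Fin n) (Fin n) ℂ) +
      Matrix.of (fun i j : Fin n => if (i : ℕ) + 1 = (j : ℕ) then 1 else 0))
    (hX : X.PosSemidef) (hS : (X - Jᴴ * X * J).PosSemidef) :
    X - Jᴴ * X * J = 0 ∧
    ∃ x : ℝ, 0 ≤ x ∧
      ∀ i j : Fin n, X i j =
        if (i : ℕ) = n - 1 ∧ (j : ℕ) = n - 1 then (x : ℂ) else 0 := by
  have ha0 : a ≠ 0 := by
    intro h; rw [h] at ha; simp at ha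
  have ha2 : (starRingEnd ℂ) a * a = 1 := by
    rw [mul_comm, Complex.mul_conj]
    norm_cast
    simp [Complex.normSq_eq_norm_sq, ha]
  have ha3 : a * (starRingEnd ℂ) a = 1 := by rw [mul_comm]; exact ha2
  set N : Matrix (Fin n) (Fin n) ℂ :=
    Matrix.of (fun i j : Fin n => if (i : ℕ) + 1 = (j : ℕ) then (1:ℂ) else 0) with hNdef
  have hherm : ∀ p q : Fin n, X p q = (starRingEnd ℂ) (X q p) := by
    intro p q
    have := congrFun (congrFun hX.isHermitian p) q
    rw [conjTranspose_apply] at this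
    exact this.symm
  have hM : X - Jᴴ * X * J
      = -((starRingEnd ℂ) a • (X * N) + a • (Nᴴ * X) + Nᴴ * X * N) := by
    subst hJ
    simp only [conjTranspose_add, conjTranspose_smul, conjTranspose_one, add_mul, mul_add,
      smul_mul_assoc, mul_smul_comm, one_mul, mul_one, smul_smul, ha2, ha3, one_smul,
      Complex.star_def]
    match_scalars <;> first
      | linear_combination (a * (starRingEnd ℂ) a - 3) * ha3
      | linear_combination (a * (starRingEnd ℂ) a - 2) * ha3
      | linear_combination (a * (starRingEnd ℂ) a - 2) * ha2
      | linear_combination ha3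
      | linear_combination ha2
      | linear_combination -ha3
      | linear_combination -ha2
      | ring
  -- key entrywise formula
  have hNXN : ∀ i j : Fin n, (Nᴴ * X * N) i j
      = extZ X (((i : ℕ) : ℤ) - 1) (((j : ℕ) : ℤ) - 1) := by
    intro i j
    rw [mulN_apply hNdef]
    split
    · next hj => rw [extZ_out X (by omega)]
    · next hj =>
      rw [Nmul_extZ hNdef]
      congr 1
      simp only [Fin.val_mk]
      omega
  have hkey : ∀ i j : Fin n, (X - Jᴴ * X * J) i j
      = -((starRingEnd ℂ) a * extZ X ((i : ℕ) : ℤ) (((j : ℕ) : ℤ) - 1)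
          + a * extZ X (((i : ℕ) : ℤ) - 1) ((j : ℕ) : ℤ)
          + extZ X (((i : ℕ) : ℤ) - 1) (((j : ℕ) : ℤ) - 1)) := by
    intro i j
    rw [hM]
    simp only [Matrix.neg_apply, Matrix.add_apply, Matrix.smul_apply, smul_eq_mul]
    rw [mulN_extZ hNdef, Nmul_extZ hNdef, hNXN]
  -- all rows of index ≤ n-2 vanish
  have hzero : ∀ m : ℕ, ∀ _ : m + 2 ≤ n, ∀ j : Fin n, X ⟨m, by omega⟩ j = 0 := by
    intro m
    induction m using Nat.strong_induction_on with
    | _ m IH =>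
      intro hm j
      have hrow : ∀ p q : ℤ, p < m → extZ X p q = 0 := by
        intro p q hp
        rw [extZ]
        split
        · next h =>
          have hlt : p.toNat < m := by omega
          exact IH p.toNat hlt (by omega) ⟨q.toNat, by omega⟩
        · rfl
      have hcol : ∀ p q : ℤ, q < m → extZ X p q = 0 := by
        intro p q hq
        rw [extZ_conj hX.isHermitian, hrow q p hq, map_zero]
      have hSmm : (X - Jᴴ * X * J) ⟨m, by omega⟩ ⟨m, by omega⟩ = 0 := by
        rw [hkey]
        simp only [Fin.val_mk]
        rw [hcol _ _ (by omega), hrow _ _ (by omega), hrow _ _ (by omega)]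
        ring
      have hs := psd_col_zero hS hSmm ⟨m + 1, by omega⟩
      rw [hkey] at hs
      simp only [Fin.val_mk] at hs
      push_cast at hs
      rw [show ((m : ℤ) + 1 - 1) = (m : ℤ) by ring] at hs
      rw [hcol _ _ (by omega)] at hs
      rw [hcol ((m : ℤ)) ((m : ℤ) - 1) (by omega)] at hs
      have hXmm : X ⟨m, by omega⟩ ⟨m, by omega⟩ = 0 := by
        rw [← extZ_eq X (p := (m : ℤ)) (q := (m : ℤ)) (by simp) (by simp)]
        have h4 : a * extZ X (m : ℤ) (m : ℤ) = 0 := by linear_combination -hs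
        rcases mul_eq_zero.mp h4 with h5 | h5
        · exact absurd h5 ha0
        · exact h5
      have hXcol := psd_col_zero hX hXmm
      rw [hherm, hXcol j, map_zero]
  -- any extZ entry with an index other than n-1 vanishes
  have hext0 : ∀ p q : ℤ, (p ≠ (n : ℤ) - 1 ∨ q ≠ (n : ℤ) - 1) → extZ X p q = 0 := by
    intro p q hpq
    rw [extZ]
    split
    · next h =>
      rcases hpq with h1 | h1
      · exact hzero p.toNat (by omega) _
      · rw [hherm, hzero q.toNat (by omega) _, map_zero]
    · rfl
  constructor
  · ext i j
    have hi := i.isLt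
    have hj := j.isLt
    rw [hkey, hext0 _ _ (by right; omega), hext0 _ _ (by left; omega),
      hext0 _ _ (by left; omega)]
    simp
  · have hnn : n - 1 < n := by omega
    have hdnn : 0 ≤ X ⟨n - 1, hnn⟩ ⟨n - 1, hnn⟩ := by
      have h1 := hX.dotProduct_mulVec_nonneg (Pi.single ⟨n - 1, hnn⟩ 1)
      simpa [mulVec_single, dotProduct, Pi.single_apply] using h1
    rw [Complex.le_def] at hdnn
    refine ⟨(X ⟨n - 1, hnn⟩ ⟨n - 1, hnn⟩).re, by simpa using hdnn.1, ?_⟩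
    intro i j
    split
    · next h =>
      have hie : i = ⟨n - 1, hnn⟩ := Fin.ext (by simpa using h.1)
      have hje : j = ⟨n - 1, hnn⟩ := Fin.ext (by simpa using h.2)
      subst hie; subst hje
      exact (Complex.ext (by simp) (by simpa using hdnn.2)).symm
    · next h =>
      have hi := i.isLt
      have hj := j.isLt
      have h0 := hext0 ((i : ℕ) : ℤ) ((j : ℕ) : ℤ) (by omega)
      rwa [extZ_eq X rfl rfl] at h0
end

section
/- Let J be any n×n matrix in Jordan canonical form all of whose eigenvalues have modulus ≥ 1. If X ≥ 0 and X − J*XJ ≥ 0, then X − J*XJ = 0. In other words, the Stein operator S_J(X) = X − J*XJ maps no nonzero positive semidefinite matrix to a nonzero positive semidefinite matrix when all eigenvalues of J lie outside the open unit disk. -/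
open Matrix ComplexOrder Filter

theorem stmt_13 (n : ℕ) (J X : Matrix (Fin n) (Fin n) ℂ)
    (hband : ∀ i j : Fin n, (j : ℕ) ≠ (i : ℕ) ∧ (j : ℕ) ≠ (i : ℕ) + 1 → J i j = 0)
    (hdiag : ∀ i : Fin n, 1 ≤ ‖J i i‖)
    (hsup : ∀ i j : Fin n, (j : ℕ) = (i : ℕ) + 1 →
      J i j = 0 ∨ (J i j = 1 ∧ J i i = J j j))
    (hX : X.PosSemidef) (hS : (X - Jᴴ * X * J).PosSemidef) :
    X - Jᴴ * X * J = 0 := by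
  -- triangularity
  have tri : ∀ i j : Fin n, (j : ℕ) < (i : ℕ) → J i j = 0 := fun i j h =>
    hband i j ⟨by omega, by omega⟩
  have pow_tri : ∀ (m : ℕ) (i j : Fin n), (j : ℕ) < (i : ℕ) → (J ^ m) i j = 0 := by
    intro m
    induction m with
    | zero =>
      intro i j h
      rw [pow_zero]
      exact Matrix.one_apply_ne (by simp [Fin.ext_iff]; omega)
    | succ m ih =>
      intro i j h
      rw [pow_succ, Matrix.mul_apply]
      apply Finset.sum_eq_zero
      intro k _
      rcases lt_or_ge (k : ℕ) (i : ℕ) with hk | hk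
      · rw [ih i k hk, zero_mul]
      · rw [tri k j (lt_of_lt_of_le h hk), mul_zero]
  have pow_diag : ∀ (m : ℕ) (i : Fin n), (J ^ m) i i = (J i i) ^ m := by
    intro m
    induction m with
    | zero => simp
    | succ m ih =>
      intro i
      rw [pow_succ, Matrix.mul_apply, Finset.sum_eq_single i]
      · rw [ih, ← pow_succ]
      · intro k _ hk
        rcases lt_or_gt_of_ne (fun h : (k:ℕ) = (i:ℕ) => hk (Fin.ext h)) with h | h
        · rw [pow_tri m i k h, zero_mul]
        · rw [tri k i h, mul_zero]
      · intro h; exact absurd (Finset.mem_univ i) h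
  -- diagonal entries of psd matrices
  have diag_nonneg : ∀ {M : Matrix (Fin n) (Fin n) ℂ}, M.PosSemidef → ∀ j : Fin n,
      0 ≤ (M j j).re := by
    intro M hM j
    have h := hM.re_dotProduct_nonneg (Pi.single j 1)
    simpa [dotProduct, Pi.single_apply, apply_ite (starRingEnd ℂ),
      Finset.sum_ite_eq'] using h
  -- telescoping
  have tele : ∀ k : ℕ, ∑ m ∈ Finset.range k, ((J ^ m)ᴴ * (X - Jᴴ * X * J) * J ^ m)
      = X - (J ^ k)ᴴ * X * J ^ k := by
    intro k
    induction k with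
    | zero => simp
    | succ k ih =>
      rw [Finset.sum_range_succ, ih, pow_succ']
      rw [conjTranspose_mul]
      noncomm_ring
  obtain ⟨B, hB⟩ : ∃ B : Matrix (Fin n) (Fin n) ℂ, X - Jᴴ * X * J = Bᴴ * B := by
    open scoped MatrixOrder in exact CStarAlgebra.nonneg_iff_eq_star_mul_self.mp hS.nonneg
  -- the diagonal sequence tends to zero
  have key : ∀ j : Fin n, Tendsto
      (fun m : ℕ => (((J ^ m)ᴴ * (X - Jᴴ * X * J) * (J ^ m)) j j).re) atTop (nhds 0) := by
    intro j
    set f : ℕ → ℝ := fun m => (((J ^ m)ᴴ * (X - Jᴴ * X * J) * (J ^ m)) j j).re with hf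
    have hf0 : ∀ m, 0 ≤ f m := fun m =>
      diag_nonneg (hS.conjTranspose_mul_mul_same (J ^ m)) j
    have hfs : ∀ k, ∑ m ∈ Finset.range k, f m ≤ (X j j).re := by
      intro k
      have : ∑ m ∈ Finset.range k, f m
          = ((X - (J ^ k)ᴴ * X * J ^ k) j j).re := by
        rw [← tele k]
        simp [hf, Matrix.sum_apply, Complex.re_sum]
      rw [this]
      have h2 := diag_nonneg (hX.conjTranspose_mul_mul_same (J ^ k)) j
      simp only [Matrix.sub_apply, Complex.sub_re]
      linarith
    exact (summable_of_sum_range_le hf0 hfs).tendsto_atTop_zero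
  -- rewrite the diagonal entries using B
  have fentry : ∀ (m : ℕ) (j : Fin n),
      (((J ^ m)ᴴ * (X - Jᴴ * X * J) * (J ^ m)) j j).re
        = ∑ r, Complex.normSq ((B * J ^ m) r j) := by
    intro m j
    have hmat : (J ^ m)ᴴ * (X - Jᴴ * X * J) * (J ^ m) = (B * J ^ m)ᴴ * (B * J ^ m) := by
      rw [hB, conjTranspose_mul]
      noncomm_ring
    rw [hmat, Matrix.mul_apply, Complex.re_sum]
    apply Finset.sum_congr rfl
    intro r _
    rw [Matrix.conjTranspose_apply, Complex.normSq_apply]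
    simp [Complex.mul_re]
  -- show B = 0 by strong induction on the column index
  have hB0 : ∀ (N : ℕ) (j : Fin n), (j : ℕ) = N → ∀ r, B r j = 0 := by
    intro N
    induction N using Nat.strong_induction_on with
    | _ N IH =>
      intro j hj r
      have hcol : ∀ m : ℕ, (B * J ^ m) r j = B r j * (J j j) ^ m := by
        intro m
        rw [Matrix.mul_apply, Finset.sum_eq_single j]
        · rw [pow_diag]
        · intro l _ hl
          rcases lt_or_gt_of_ne (fun h : (l:ℕ) = (j:ℕ) => hl (Fin.ext h)) with h | h
          · rw [IH l (by omega) l rfl r, zero_mul]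
          · rw [pow_tri m l j h, mul_zero]
        · intro h; exact absurd (Finset.mem_univ j) h
      have hten : Tendsto (fun m : ℕ => Complex.normSq ((B * J ^ m) r j)) atTop (nhds 0) := by
        have hsq := key j
        refine squeeze_zero (fun m => Complex.normSq_nonneg _) (fun m => ?_) hsq
        rw [fentry m j]
        exact Finset.single_le_sum (f := fun i => Complex.normSq ((B * J ^ m) i j))
          (fun i _ => Complex.normSq_nonneg _) (Finset.mem_univ r)
      have hlow : ∀ m : ℕ, Complex.normSq (B r j) ≤ Complex.normSq ((B * J ^ m) r j) := by
        intro m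
        rw [hcol m, Complex.normSq_mul, map_pow]
        have h1 : (1:ℝ) ≤ Complex.normSq (J j j) := by
          rw [Complex.normSq_eq_norm_sq]
          exact one_le_pow₀ (hdiag j)
        exact le_mul_of_one_le_right (Complex.normSq_nonneg _) (one_le_pow₀ h1)
      have hzero : Complex.normSq (B r j) ≤ 0 := ge_of_tendsto' hten hlow
      exact Complex.normSq_eq_zero.mp (le_antisymm hzero (Complex.normSq_nonneg _))
  have hBzero : B = 0 := by
    ext r j
    exact hB0 (j : ℕ) j rfl r
  rw [hB, hBzero]
  simp
end

section
/- Let A be n×n complex, G, H positive semidefinite, and X a Hermitian solution of the DARE X = H + A*X(I + GX)⁻¹A with X in the set {Y ≥ 0 : Y ≥ R_d(Y)}. Then, with T_X = (I + GX)⁻¹A, the matrix X − T_X* X T_X is positive semidefinite; explicitly X − T_X*XT_X ≥ H + T_X*XGXT_X ≥ 0. -/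
open Matrix ComplexOrder

theorem stmt_14 (n : ℕ) (A G H X : Matrix (Fin n) (Fin n) ℂ)
    (hG : G.PosSemidef) (hH : H.PosSemidef)
    (hX : X.PosSemidef)
    (heq : X = H + Aᴴ * X * (1 + G * X)⁻¹ * A) :
    (H + ((1 + G * X)⁻¹ * A)ᴴ * X * G * X * ((1 + G * X)⁻¹ * A)).PosSemidef ∧
    ((X - ((1 + G * X)⁻¹ * A)ᴴ * X * ((1 + G * X)⁻¹ * A)) -
      (H + ((1 + G * X)⁻¹ * A)ᴴ * X * G * X * ((1 + G * X)⁻¹ * A))).PosSemidef ∧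
    (X - ((1 + G * X)⁻¹ * A)ᴴ * X * ((1 + G * X)⁻¹ * A)).PosSemidef := by
  set T := (1 + G * X)⁻¹ * A with hT
  clear_value T
  -- invertibility of 1 + G * X
  obtain ⟨S, hSpsd, hSS⟩ : ∃ S : Matrix (Fin n) (Fin n) ℂ, S.PosSemidef ∧ S * S = X := by
    open scoped MatrixOrder in
    exact ⟨CFC.sqrt X, (CFC.sqrt_nonneg X).posSemidef, CFC.sqrt_mul_sqrt_self X hX.nonneg⟩
  have hSGS : (S * G * S).PosSemidef := by
    have := hG.conjTranspose_mul_mul_same S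
    rwa [hSpsd.isHermitian.eq] at this
  have hPD : (1 + S * G * S).PosDef := by
    simpa [add_comm] using Matrix.PosDef.one.add_posSemidef hSGS
  have hdet : IsUnit (1 + G * X).det := by
    have : (1 + G * X).det = (1 + S * G * S).det := by
      conv_lhs => rw [← hSS]
      rw [show G * (S * S) = (G * S) * S by noncomm_ring,
        Matrix.det_one_add_mul_comm, mul_assoc]
    rw [this]
    exact isUnit_iff_ne_zero.2 (ne_of_gt hPD.det_pos)
  have hA : A = (1 + G * X) * T := by
    rw [hT, ← mul_assoc, Matrix.mul_nonsing_inv _ hdet, one_mul]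
  have hAH : Aᴴ = Tᴴ * (1 + X * G) := by
    rw [hA, conjTranspose_mul]
    simp [conjTranspose_add, conjTranspose_mul, hX.isHermitian.eq, hG.isHermitian.eq]
  have h2 : Aᴴ * X * (1 + G * X)⁻¹ * A = Tᴴ * X * T + Tᴴ * X * G * X * T := by
    rw [hAH]
    calc Tᴴ * (1 + X * G) * X * (1 + G * X)⁻¹ * A
        = Tᴴ * X * ((1 + G * X)⁻¹ * A) + Tᴴ * X * G * X * ((1 + G * X)⁻¹ * A) := by
          noncomm_ring
      _ = Tᴴ * X * T + Tᴴ * X * G * X * T := by rw [← hT]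
  have h3 : X = H + (Tᴴ * X * T + Tᴴ * X * G * X * T) := heq.trans (by rw [h2])
  have key : X - Tᴴ * X * T = H + Tᴴ * X * G * X * T := by
    rw [sub_eq_iff_eq_add]
    nth_rewrite 1 [h3]
    abel
  have h1 : (H + Tᴴ * X * G * X * T).PosSemidef := by
    have hXGX : (X * G * X).PosSemidef := by
      have := hG.conjTranspose_mul_mul_same X
      rwa [hX.isHermitian.eq] at this
    have e : Tᴴ * X * G * X * T = Tᴴ * (X * G * X) * T := by noncomm_ring
    rw [e]
    exact hH.add (hXGX.conjTranspose_mul_mul_same T)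
  refine ⟨h1, ?_, ?_⟩
  · rw [key, sub_self]
    exact Matrix.PosSemidef.zero
  · rw [key]; exact h1
end

section
/- Let A be n×n complex, G, H positive semidefinite, and suppose X is a positive definite Hermitian solution of the DARE X = H + A*X(I + GX)⁻¹A. Then the closed-loop matrix T_X = (I + GX)⁻¹A satisfies ρ(T_X) ≤ 1 and every unimodular eigenvalue of T_X is semisimple (X is an almost stabilizing solution). If moreover H is positive definite, then ρ(T_X) < 1 (X is a stabilizing solution). -/
open Matrix ComplexOrder

lemma eigvec {n : ℕ} {T : Matrix (Fin n) (Fin n) ℂ} {μ : ℂ} (h : μ ∈ spectrum ℂ T) :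
    ∃ v : Fin n → ℂ, v ≠ 0 ∧ T *ᵥ v = μ • v := by
  rw [spectrum.mem_iff] at h
  have hdet : (algebraMap ℂ (Matrix (Fin n) (Fin n) ℂ) μ - T).det = 0 := by
    by_contra hd
    exact h ((Matrix.isUnit_iff_isUnit_det _).mpr (Ne.isUnit hd))
  obtain ⟨v, hv0, hv⟩ := (Matrix.exists_mulVec_eq_zero_iff).mpr hdet
  refine ⟨v, hv0, ?_⟩
  rw [Algebra.algebraMap_eq_smul_one, sub_mulVec, smul_mulVec, one_mulVec] at hv
  exact (sub_eq_zero.mp hv).symm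

lemma quad_sub {n : ℕ} (T X : Matrix (Fin n) (Fin n) ℂ) (u : Fin n → ℂ) :
    star u ⬝ᵥ ((X - Tᴴ * X * T) *ᵥ u)
      = star u ⬝ᵥ (X *ᵥ u) - star (T *ᵥ u) ⬝ᵥ (X *ᵥ (T *ᵥ u)) := by
  rw [sub_mulVec, dotProduct_sub]
  congr 1
  rw [star_mulVec, ← mulVec_mulVec, ← mulVec_mulVec, dotProduct_mulVec (star u) Tᴴ]

lemma quad_smul {n : ℕ} (X : Matrix (Fin n) (Fin n) ℂ) (s : ℂ) (u : Fin n → ℂ) :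
    star (s • u) ⬝ᵥ (X *ᵥ (s • u)) = (star s * s) * (star u ⬝ᵥ (X *ᵥ u)) := by
  simp [star_smul, smul_dotProduct, mulVec_smul, dotProduct_smul, smul_eq_mul]; ring

lemma star_mul_self_eq (μ : ℂ) : star μ * μ = ((‖μ‖^2 : ℝ) : ℂ) := by
  rw [RCLike.star_def, ← Complex.normSq_eq_conj_mul_self, Complex.normSq_eq_norm_sq]

lemma stein_le {n : ℕ} {T X : Matrix (Fin n) (Fin n) ℂ} (hX : X.PosDef)
    (hY : (X - Tᴴ * X * T).PosSemidef) {μ : ℂ} {v : Fin n → ℂ}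
    (hv0 : v ≠ 0) (hv : T *ᵥ v = μ • v) : ‖μ‖ ≤ 1 := by
  have h1 := (Complex.le_def.mp (hY.dotProduct_mulVec_nonneg v)).1
  rw [quad_sub, hv, quad_smul, star_mul_self_eq] at h1
  set q := star v ⬝ᵥ (X *ᵥ v) with hq
  have hq0 : 0 < q.re := (Complex.lt_def.mp (hX.dotProduct_mulVec_pos hv0)).1
  rw [Complex.sub_re, Complex.re_ofReal_mul, Complex.zero_re] at h1
  by_contra h
  push_neg at h
  nlinarith [mul_pos (show (0:ℝ) < ‖μ‖^2 - 1 by nlinarith) hq0]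

lemma stein_lt {n : ℕ} {T X : Matrix (Fin n) (Fin n) ℂ} (hX : X.PosDef)
    (hY : (X - Tᴴ * X * T).PosDef) {μ : ℂ} {v : Fin n → ℂ}
    (hv0 : v ≠ 0) (hv : T *ᵥ v = μ • v) : ‖μ‖ < 1 := by
  have h1 := (Complex.lt_def.mp (hY.dotProduct_mulVec_pos hv0)).1
  rw [quad_sub, hv, quad_smul, star_mul_self_eq] at h1
  set q := star v ⬝ᵥ (X *ᵥ v) with hq
  have hq0 : 0 < q.re := (Complex.lt_def.mp (hX.dotProduct_mulVec_pos hv0)).1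
  rw [Complex.sub_re, Complex.re_ofReal_mul, Complex.zero_re] at h1
  by_contra h
  push_neg at h
  nlinarith [mul_nonneg (show (0:ℝ) ≤ ‖μ‖^2 - 1 by nlinarith) hq0.le]

lemma stein_ss {n : ℕ} {T X : Matrix (Fin n) (Fin n) ℂ} (hX : X.PosDef)
    (hY : (X - Tᴴ * X * T).PosSemidef) {μ : ℂ} (hμ : ‖μ‖ = 1)
    (v : Fin n → ℂ) (h2 : (T - μ • 1) *ᵥ ((T - μ • 1) *ᵥ v) = 0) :
    (T - μ • 1) *ᵥ v = 0 := by
  by_contra hw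
  set w := (T - μ • 1) *ᵥ v with hwdef
  have hμ2 : star μ * μ = 1 := by rw [star_mul_self_eq μ, hμ]; norm_num
  have hTw : T *ᵥ w = μ • w := by
    rw [sub_mulVec, smul_mulVec, one_mulVec, sub_eq_zero] at h2
    exact h2
  have hTv : T *ᵥ v = μ • v + w := by
    rw [hwdef, sub_mulVec, smul_mulVec, one_mulVec]; abel
  set a := star v ⬝ᵥ (X *ᵥ v) with ha
  set b := star v ⬝ᵥ (X *ᵥ w) with hb
  set c := star w ⬝ᵥ (X *ᵥ v) with hc
  set d := star w ⬝ᵥ (X *ᵥ w) with hd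
  have hdre : 0 < d.re := (Complex.lt_def.mp (hX.dotProduct_mulVec_pos hw)).1
  have key : ∀ t : ℝ, 0 ≤ (-(star μ * b) - μ * c).re - (2*t+1) * d.re := by
    intro t
    set u := v + ((t:ℂ) * star μ) • w with hu
    have hTu : T *ᵥ u = μ • v + ((1:ℂ) + t) • w := by
      rw [hu, mulVec_add, mulVec_smul, hTv, hTw, smul_smul, mul_assoc, hμ2, mul_one]
      module
    have hQ := (Complex.le_def.mp (hY.dotProduct_mulVec_nonneg u)).1
    rw [quad_sub, hTu] at hQ
    have hexp : star u ⬝ᵥ (X *ᵥ u)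
          - star (μ • v + ((1:ℂ) + t) • w) ⬝ᵥ (X *ᵥ (μ • v + ((1:ℂ) + t) • w))
        = -(star μ * b) - μ * c - ((2*t+1 : ℝ):ℂ) * d := by
      have hμ2' : (starRingEnd ℂ) μ * μ = 1 := hμ2
      simp only [hu, mulVec_add, mulVec_smul, star_add, star_smul, dotProduct_add,
        add_dotProduct, smul_dotProduct, dotProduct_smul, smul_eq_mul, star_mul',
        star_star, RCLike.star_def, Complex.conj_conj, Complex.conj_ofReal, _root_.map_one]
      push_cast
      linear_combination ((t:ℂ)^2 * d - a) * hμ2'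
    rw [hexp] at hQ
    simpa [Complex.sub_re, Complex.re_ofReal_mul] using hQ
  have hcontr := key (((-(star μ * b) - μ * c).re) / (2*d.re) + 1)
  have harith : (2*(((-(star μ * b) - μ * c).re) / (2*d.re) + 1)+1) * d.re
      = (-(star μ * b) - μ * c).re + 3*d.re := by
    field_simp
    ring
  rw [harith] at hcontr
  linarith

theorem stmt_15 (n : ℕ) (A G H X : Matrix (Fin n) (Fin n) ℂ)
    (hG : G.PosSemidef) (hH : H.PosSemidef)
    (hX : X.PosDef)
    (heq : X = H + Aᴴ * X * (1 + G * X)⁻¹ * A) :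
    (∀ μ ∈ spectrum ℂ ((1 + G * X)⁻¹ * A), ‖μ‖ ≤ 1) ∧
    (∀ μ ∈ spectrum ℂ ((1 + G * X)⁻¹ * A), ‖μ‖ = 1 →
      ∀ v : Fin n → ℂ,
        ((1 + G * X)⁻¹ * A - μ • 1) *ᵥ (((1 + G * X)⁻¹ * A - μ • 1) *ᵥ v) = 0 →
        ((1 + G * X)⁻¹ * A - μ • 1) *ᵥ v = 0) ∧
    (H.PosDef → ∀ μ ∈ spectrum ℂ ((1 + G * X)⁻¹ * A), ‖μ‖ < 1) := by
  have hXH := hX.isHermitian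
  have hdX : IsUnit X.det := hX.det_pos.ne'.isUnit
  have hP : (X⁻¹ + G).PosDef := hX.inv.add_posSemidef hG
  set S := 1 + G * X with hSdef
  have hS : S = (X⁻¹ + G) * X := by
    rw [hSdef, add_mul, Matrix.nonsing_inv_mul X hdX]
  have hSu : IsUnit S.det := by
    rw [hS, det_mul]
    exact (hP.det_pos.ne'.isUnit).mul hdX
  have hM : X * S⁻¹ = (X⁻¹ + G)⁻¹ := by
    rw [hS, Matrix.mul_inv_rev, ← Matrix.mul_assoc, Matrix.mul_nonsing_inv X hdX, one_mul]
  have hcomm : (S⁻¹)ᴴ * X = X * S⁻¹ := by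
    have h1 : (X * S⁻¹)ᴴ = X * S⁻¹ := by rw [hM]; exact hP.inv.isHermitian
    rw [← h1, conjTranspose_mul, hXH.eq]
  have hXS : X + X * G * X = X * S := by
    rw [hSdef, mul_add, mul_one, Matrix.mul_assoc]
  set T := S⁻¹ * A with hT
  have e2 : (S⁻¹)ᴴ * ((X + X * G * X) * S⁻¹) = X * S⁻¹ := by
    rw [hXS, Matrix.mul_assoc X S S⁻¹, Matrix.mul_nonsing_inv S hSu, mul_one, hcomm]
  have e1 : Tᴴ * X * T + (X * T)ᴴ * G * (X * T)
      = Aᴴ * ((S⁻¹)ᴴ * ((X + X * G * X) * S⁻¹)) * A := by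
    simp only [hT, conjTranspose_mul, hXH.eq]
    noncomm_ring
  have e3 : Tᴴ * X * T + (X * T)ᴴ * G * (X * T) = Aᴴ * X * S⁻¹ * A := by
    rw [e1, e2, ← Matrix.mul_assoc, Matrix.mul_assoc Aᴴ X S⁻¹]
  have key : X - Tᴴ * X * T = H + (X * T)ᴴ * G * (X * T) := by
    nth_rewrite 1 [heq]
    rw [← e3]
    abel
  have hY : (X - Tᴴ * X * T).PosSemidef := by
    rw [key]
    exact hH.add (hG.conjTranspose_mul_mul_same (X * T))
  refine ⟨?_, ?_, ?_⟩
  · intro μ hμ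
    obtain ⟨v, hv0, hv⟩ := eigvec hμ
    exact stein_le hX hY hv0 hv
  · intro μ _ hμ1 v h2
    exact stein_ss hX hY hμ1 v h2
  · intro hH' μ hμ
    obtain ⟨v, hv0, hv⟩ := eigvec hμ
    have hY' : (X - Tᴴ * X * T).PosDef := by
      rw [key]
      exact hH'.add_posSemidef (hG.conjTranspose_mul_mul_same (X * T))
    exact stein_lt hX hY' hv0 hv
end

section
/- Let g ≥ 0, h ≥ 0, a ≥ 0 be real numbers and suppose either g > 0, or (g = 0 and a < 1). Then the quadratic inequality g x² + (1 − a − hg)x − h ≥ 0 has a nonnegative real solution x_c, and this x_c satisfies x_c ≥ h + (a x_c)/(1 + g x_c). -/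
open Matrix ComplexOrder

lemma aux_16 (g h a x : ℝ) (hg : 0 ≤ g) (hx : 0 ≤ x)
    (hq : 0 ≤ g * x ^ 2 + (1 - a - h * g) * x - h) :
    h + a * x / (1 + g * x) ≤ x := by
  have h1 : 0 < 1 + g * x := by positivity
  rw [← sub_nonneg]
  have : x - (h + a * x / (1 + g * x)) =
      (g * x ^ 2 + (1 - a - h * g) * x - h) / (1 + g * x) := by
    field_simp
    ring
  rw [this]
  positivity

theorem stmt_16 (g h a : ℝ) (hg : 0 ≤ g) (hh : 0 ≤ h) (ha : 0 ≤ a)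
    (hcase : 0 < g ∨ (g = 0 ∧ a < 1)) :
    ∃ x : ℝ, 0 ≤ x ∧ 0 ≤ g * x ^ 2 + (1 - a - h * g) * x - h ∧
      h + a * x / (1 + g * x) ≤ x := by
  rcases hcase with hg0 | ⟨hg0, ha1⟩
  · set b := 1 - a - h * g with hb
    set s := Real.sqrt (b ^ 2 + 4 * g * h) with hs
    have hs2 : s ^ 2 = b ^ 2 + 4 * g * h := Real.sq_sqrt (by positivity)
    have habs : |b| ≤ s := by
      rw [hs, ← Real.sqrt_sq_eq_abs]
      exact Real.sqrt_le_sqrt (by nlinarith)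
    have hbs : b ≤ s := (le_abs_self b).trans habs
    refine ⟨(s - b) / (2 * g), div_nonneg (by linarith) (by linarith), ?_, ?_⟩
    · have : g * ((s - b) / (2 * g)) ^ 2 + b * ((s - b) / (2 * g)) - h = 0 := by
        field_simp
        nlinarith [hs2]
      linarith [this]
    · apply aux_16 g h a _ hg (div_nonneg (by linarith) (by linarith))
      have : g * ((s - b) / (2 * g)) ^ 2 + b * ((s - b) / (2 * g)) - h = 0 := by
        field_simp
        nlinarith [hs2]
      linarith [this]
  · subst hg0
    refine ⟨h / (1 - a), div_nonneg hh (by linarith), ?_, ?_⟩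
    · have : (0:ℝ) * (h / (1 - a)) ^ 2 + (1 - a - h * 0) * (h / (1 - a)) - h = 0 := by
        field_simp
        rw [zero_mul, sub_zero, zero_add, ← sq, div_self (pow_ne_zero 2 (ne_of_gt (by linarith : (0:ℝ) < 1 - a)))]; ring
      linarith [this]
    · apply aux_16 0 h a _ le_rfl (div_nonneg hh (by linarith))
      have : (0:ℝ) * (h / (1 - a)) ^ 2 + (1 - a - h * 0) * (h / (1 - a)) - h = 0 := by
        field_simp
        rw [zero_mul, sub_zero, zero_add, ← sq, div_self (pow_ne_zero 2 (ne_of_gt (by linarith : (0:ℝ) < 1 - a)))]; ring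
      linarith [this]
end

section
/- Let R_d(X) = H + A*X(I + GX)⁻¹A with A ∈ C^{n×n}, G, H ≥ 0, and suppose there exists Ŷ ≥ 0 with Ŷ ≥ R_d(Ŷ). Then the iteration X₁ = H (more generally any X₁ with 0 ≤ X₁ ≤ H), X_{k+1} = R_d(X_k), produces a monotonically nondecreasing sequence bounded above by Ŷ, which converges to the minimal positive semidefinite solution X⋆ of the DARE: X⋆ = R_d(X⋆) and X⋆ ≤ S for every positive semidefinite solution S. -/
open Matrix ComplexOrder Filter


section Helpers

variable {n : ℕ}

private lemma star_mulVec_dot (M : Matrix (Fin n) (Fin n) ℂ) (w : Fin n → ℂ) :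
    star (M *ᵥ w) ⬝ᵥ w = star w ⬝ᵥ (Mᴴ *ᵥ w) := by
  rw [star_mulVec, ← Matrix.dotProduct_mulVec]

lemma unit_one_add_mul {G X : Matrix (Fin n) (Fin n) ℂ}
    (hG : G.PosSemidef) (hX : X.PosSemidef) :
    IsUnit (1 + G * X).det := by
  rw [isUnit_iff_ne_zero]
  intro hdet
  obtain ⟨v, hv, hmv⟩ := (Matrix.exists_mulVec_eq_zero_iff).2 hdet
  have hv' : v + G *ᵥ (X *ᵥ v) = 0 := by
    simpa [Matrix.add_mulVec, Matrix.one_mulVec, Matrix.mulVec_mulVec] using hmv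
  have hveq : v = -(G *ᵥ (X *ᵥ v)) := eq_neg_of_add_eq_zero_left hv'
  have hq : (0:ℂ) ≤ star v ⬝ᵥ (X *ᵥ v) := hX.dotProduct_mulVec_nonneg v
  have hp : (0:ℂ) ≤ star (X *ᵥ v) ⬝ᵥ (G *ᵥ (X *ᵥ v)) := hG.dotProduct_mulVec_nonneg (X *ᵥ v)
  have hqp : star v ⬝ᵥ (X *ᵥ v) = -(star (X *ᵥ v) ⬝ᵥ (G *ᵥ (X *ᵥ v))) := by
    nth_rewrite 1 [hveq]
    rw [star_neg, neg_dotProduct, star_mulVec_dot, hG.1]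
  have hq0 : star v ⬝ᵥ (X *ᵥ v) = 0 :=
    le_antisymm (by rw [hqp]; exact neg_nonpos_of_nonneg hp) hq
  have hp0 : star (X *ᵥ v) ⬝ᵥ (G *ᵥ (X *ᵥ v)) = 0 := by
    have h2 := hqp; rw [hq0] at h2; exact neg_eq_zero.mp h2.symm
  have hGw : G *ᵥ (X *ᵥ v) = 0 := (hG.dotProduct_mulVec_zero_iff (X *ᵥ v)).1 hp0
  exact hv (by rw [hveq, hGw, neg_zero])

lemma push_through {B C : Matrix (Fin n) (Fin n) ℂ} (h1 : IsUnit (1 + C * B).det)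
    (h2 : IsUnit (1 + B * C).det) :
    B * (1 + C * B)⁻¹ = (1 + B * C)⁻¹ * B := by
  have key : (1 + B * C) * B = B * (1 + C * B) := by noncomm_ring
  calc B * (1 + C * B)⁻¹
      = (1 + B * C)⁻¹ * ((1 + B * C) * B * (1 + C * B)⁻¹) := by
        rw [← Matrix.mul_assoc, ← Matrix.mul_assoc, Matrix.nonsing_inv_mul _ h2, Matrix.one_mul]
    _ = (1 + B * C)⁻¹ * (B * ((1 + C * B) * (1 + C * B)⁻¹)) := by
        rw [key, Matrix.mul_assoc]
    _ = (1 + B * C)⁻¹ * B := by rw [Matrix.mul_nonsing_inv _ h1, Matrix.mul_one]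

lemma herm_inv {G X : Matrix (Fin n) (Fin n) ℂ} (hG : G.IsHermitian) (hX : X.IsHermitian) :
    ((1 + X * G)⁻¹)ᴴ = (1 + G * X)⁻¹ := by
  rw [Matrix.conjTranspose_nonsing_inv, conjTranspose_add, conjTranspose_one,
    conjTranspose_mul, hG.eq, hX.eq]

lemma inv_mul_psd {G X : Matrix (Fin n) (Fin n) ℂ} (hG : G.PosSemidef) (hX : X.PosSemidef) :
    ((1 + G * X)⁻¹ * G).PosSemidef := by
  have u2 : IsUnit (1 + X * G).det := unit_one_add_mul hX hG
  have key : (1 + G * X)⁻¹ * G = ((1 + X * G)⁻¹)ᴴ * (G + G * X * G) * (1 + X * G)⁻¹ := by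
    rw [herm_inv hG.1 hX.1]
    have h2 : (G + G * X * G) * (1 + X * G)⁻¹ = G := by
      have h3 : G + G * X * G = G * (1 + X * G) := by noncomm_ring
      rw [h3, Matrix.mul_assoc, Matrix.mul_nonsing_inv _ u2, Matrix.mul_one]
    rw [Matrix.mul_assoc, h2]
  have hmid : (G + G * X * G).PosSemidef := by
    have := hX.conjTranspose_mul_mul_same G
    rw [hG.1.eq] at this
    exact hG.add this
  rw [key]
  exact hmid.conjTranspose_mul_mul_same _

open scoped MatrixOrder in
lemma resolvent_mono {G X Y : Matrix (Fin n) (Fin n) ℂ} (hG : G.PosSemidef) (hX : X.PosSemidef)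
    (hY : Y.PosSemidef) (hΔ : (Y - X).PosSemidef) :
    (Y * (1 + G * Y)⁻¹ - X * (1 + G * X)⁻¹).PosSemidef := by
  have u1 : IsUnit (1 + G * X).det := unit_one_add_mul hG hX
  have u2 : IsUnit (1 + X * G).det := unit_one_add_mul hX hG
  have u3 : IsUnit (1 + G * Y).det := unit_one_add_mul hG hY
  set T : Matrix (Fin n) (Fin n) ℂ := (1 + G * X)⁻¹ * G with hT_def
  have hT : T.PosSemidef := inv_mul_psd hG hX
  set E : Matrix (Fin n) (Fin n) ℂ := CFC.sqrt (Y - X) with hE_def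
  have hE : E.PosSemidef := (CFC.sqrt_nonneg _).posSemidef
  have hEE : E * E = Y - X := CFC.sqrt_mul_sqrt_self _ hΔ.nonneg
  have fact0 : (1 + G * X) * T = G := by
    rw [hT_def]; exact Matrix.mul_nonsing_inv_cancel_left _ G u1
  clear_value T E
  have fact1 : (1 + G * X) * (1 + T * (Y - X)) = 1 + G * Y := by
    have h : (1 + G * X) * (1 + T * (Y - X))
        = 1 + G * X + ((1 + G * X) * T) * (Y - X) := by noncomm_ring
    rw [h, fact0]; noncomm_ring
  have uT : IsUnit (1 + T * (Y - X)).det := by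
    have h := u3
    rw [← fact1, Matrix.det_mul] at h
    exact isUnit_of_mul_isUnit_right h
  have step2 : (1 + G * Y)⁻¹ = (1 + T * (Y - X))⁻¹ * (1 + G * X)⁻¹ := by
    rw [← fact1, Matrix.mul_inv_rev]
  have e1 : 1 + T * (Y - X) = 1 + T * E * E := by rw [Matrix.mul_assoc, hEE]
  have uTE : IsUnit (1 + T * E * E).det := by rw [← e1]; exact uT
  have hETE : (E * (T * E)).PosSemidef := by
    have h := hT.conjTranspose_mul_mul_same E
    rw [hE.1.eq] at h
    rw [← Matrix.mul_assoc]
    exact h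
  have hM : (1 + E * (T * E)).PosDef := Matrix.PosDef.one.add_posSemidef hETE
  have uM : IsUnit (1 + E * (T * E)).det := hM.det_pos.ne'.isUnit
  have hMinv : ((1 + E * (T * E))⁻¹).PosDef := hM.inv
  have step3 : E * (1 + T * E * E)⁻¹ = (1 + E * (T * E))⁻¹ * E :=
    push_through (B := E) (C := T * E) uTE uM
  have hFX : X * (1 + G * X)⁻¹ = (1 + X * G)⁻¹ * X := push_through u1 u2
  have hYQ : Y * (1 + G * Y)⁻¹ = (1 + X * G)⁻¹ * ((Y + X * G * Y) * (1 + G * Y)⁻¹) := by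
    have h : (1 + X * G) * (Y * (1 + G * Y)⁻¹) = (Y + X * G * Y) * (1 + G * Y)⁻¹ := by
      simp only [← Matrix.mul_assoc]; noncomm_ring
    rw [← h, ← Matrix.mul_assoc, Matrix.nonsing_inv_mul _ u2, Matrix.one_mul]
  have hX2 : (1 + X * G)⁻¹ * X = (1 + X * G)⁻¹ * ((X * (1 + G * Y)) * (1 + G * Y)⁻¹) := by
    rw [Matrix.mul_assoc X, Matrix.mul_nonsing_inv _ u3, Matrix.mul_one]
  have identity1 : Y * (1 + G * Y)⁻¹ - X * (1 + G * X)⁻¹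
      = (1 + X * G)⁻¹ * (Y - X) * (1 + G * Y)⁻¹ := by
    rw [hFX, hYQ, hX2]
    noncomm_ring
  have main : Y * (1 + G * Y)⁻¹ - X * (1 + G * X)⁻¹
      = ((1 + X * G)⁻¹ * E) * (1 + E * (T * E))⁻¹ * (((1 + X * G)⁻¹ * E)ᴴ) := by
    have hadj : ((1 + X * G)⁻¹ * E)ᴴ = E * (1 + G * X)⁻¹ := by
      rw [conjTranspose_mul, hE.1.eq, herm_inv hG.1 hX.1]
    rw [hadj, identity1, step2, e1, ← hEE]
    calc (1 + X * G)⁻¹ * (E * E) * ((1 + T * E * E)⁻¹ * (1 + G * X)⁻¹)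
        = (1 + X * G)⁻¹ * E * (E * (1 + T * E * E)⁻¹) * (1 + G * X)⁻¹ := by
          simp only [Matrix.mul_assoc]
      _ = (1 + X * G)⁻¹ * E * ((1 + E * (T * E))⁻¹ * E) * (1 + G * X)⁻¹ := by rw [step3]
      _ = (1 + X * G)⁻¹ * E * (1 + E * (T * E))⁻¹ * (E * (1 + G * X)⁻¹) := by
          simp only [Matrix.mul_assoc]
  rw [main]
  exact hMinv.posSemidef.mul_mul_conjTranspose_same _

lemma star_single (i : Fin n) (c : ℂ) :
    star (Pi.single i c) = (Pi.single i (star c) : Fin n → ℂ) := by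
  funext a
  by_cases h : a = i <;> simp [Pi.single_apply, h]

lemma quad_expand (M : Matrix (Fin n) (Fin n) ℂ) (i j : Fin n) (c d : ℂ) :
    star (Pi.single i c + Pi.single j d) ⬝ᵥ (M *ᵥ (Pi.single i c + Pi.single j d))
      = star c * (M i i * c) + star c * (M i j * d)
        + star d * (M j i * c) + star d * (M j j * d) := by
  rw [Matrix.mulVec_add, star_add, star_single, star_single]
  simp [add_dotProduct, dotProduct_add, single_dotProduct, Matrix.mulVec_single]
  ring

lemma polarize (M : Matrix (Fin n) (Fin n) ℂ) (i j : Fin n) :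
    M i j =
      (star (Pi.single i 1 + Pi.single j (1:ℂ)) ⬝ᵥ (M *ᵥ (Pi.single i 1 + Pi.single j 1))
        - star (Pi.single i 1 + Pi.single j (-1:ℂ)) ⬝ᵥ
            (M *ᵥ (Pi.single i 1 + Pi.single j (-1)))) / 4
      + (star (Pi.single i 1 + Pi.single j Complex.I) ⬝ᵥ
            (M *ᵥ (Pi.single i 1 + Pi.single j Complex.I))
        - star (Pi.single i 1 + Pi.single j (-Complex.I)) ⬝ᵥ
            (M *ᵥ (Pi.single i 1 + Pi.single j (-Complex.I)))) / (4 * Complex.I) := by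
  rw [quad_expand, quad_expand, quad_expand, quad_expand]
  simp only [star_one, one_mul, mul_one, star_neg, neg_neg, Complex.star_def, Complex.conj_I,
    _root_.map_one]
  field_simp
  ring_nf

lemma psd_limit {f : ℕ → Matrix (Fin n) (Fin n) ℂ} {L : Matrix (Fin n) (Fin n) ℂ}
    (hf : ∀ k, (f k).PosSemidef) (hL : Tendsto f atTop (nhds L)) : L.PosSemidef := by
  refine posSemidef_iff_dotProduct_mulVec.2 ⟨?_, ?_⟩
  · have hc : Tendsto (fun k => (f k)ᴴ) atTop (nhds Lᴴ) :=
      ((continuous_id.matrix_conjTranspose).tendsto L).comp hL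
    have he : (fun k => (f k)ᴴ) = f := funext fun k => (hf k).1.eq
    rw [he] at hc
    exact (tendsto_nhds_unique hc hL)
  · intro x
    have hq : Tendsto (fun k => star x ⬝ᵥ ((f k) *ᵥ x)) atTop (nhds (star x ⬝ᵥ (L *ᵥ x))) := by
      have hcont : Continuous fun M : Matrix (Fin n) (Fin n) ℂ => star x ⬝ᵥ (M *ᵥ x) :=
        (continuous_const.dotProduct (continuous_id.matrix_mulVec continuous_const))
      exact (hcont.tendsto L).comp hL
    have him : Tendsto (fun k => (star x ⬝ᵥ ((f k) *ᵥ x)).im) atTop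
        (nhds ((star x ⬝ᵥ (L *ᵥ x)).im)) := (Complex.continuous_im.tendsto _).comp hq
    have hre : Tendsto (fun k => (star x ⬝ᵥ ((f k) *ᵥ x)).re) atTop
        (nhds ((star x ⬝ᵥ (L *ᵥ x)).re)) := (Complex.continuous_re.tendsto _).comp hq
    have him0 : ∀ k, (star x ⬝ᵥ ((f k) *ᵥ x)).im = 0 := fun k =>
      (Complex.le_def.1 ((hf k).dotProduct_mulVec_nonneg x)).2.symm
    have hre0 : ∀ k, 0 ≤ (star x ⬝ᵥ ((f k) *ᵥ x)).re := fun k =>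
      (Complex.le_def.1 ((hf k).dotProduct_mulVec_nonneg x)).1
    rw [Complex.le_def]
    constructor
    · simpa using ge_of_tendsto' hre hre0
    · simp only [Complex.zero_im]
      have h0 : Tendsto (fun _ : ℕ => (0:ℝ)) atTop (nhds ((star x ⬝ᵥ (L *ᵥ x)).im)) := by
        simpa [funext him0] using him
      exact (tendsto_nhds_unique h0 tendsto_const_nhds).symm

end Helpers

theorem stmt_18 (n : ℕ) (A G H : Matrix (Fin n) (Fin n) ℂ)
    (hG : G.PosSemidef) (hH : H.PosSemidef)
    (Rd : Matrix (Fin n) (Fin n) ℂ → Matrix (Fin n) (Fin n) ℂ)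
    (hRd : ∀ X, Rd X = H + Aᴴ * X * (1 + G * X)⁻¹ * A)
    (Y : Matrix (Fin n) (Fin n) ℂ) (hY : Y.PosSemidef) (hYge : (Y - Rd Y).PosSemidef)
    (X₁ : Matrix (Fin n) (Fin n) ℂ) (hX₁ : X₁.PosSemidef) (hX₁H : (H - X₁).PosSemidef) :
    (∀ k : ℕ, (Rd^[k+1] X₁ - Rd^[k] X₁).PosSemidef) ∧
    (∀ k : ℕ, (Y - Rd^[k] X₁).PosSemidef) ∧
    ∃ Xs : Matrix (Fin n) (Fin n) ℂ,
      Filter.Tendsto (fun k => Rd^[k] X₁) Filter.atTop (nhds Xs) ∧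
      Xs.PosSemidef ∧ Xs = Rd Xs ∧
      ∀ S : Matrix (Fin n) (Fin n) ℂ, S.PosSemidef → S = Rd S → (S - Xs).PosSemidef := by
  have hFpsd : ∀ {X : Matrix (Fin n) (Fin n) ℂ}, X.PosSemidef →
      (X * (1 + G * X)⁻¹).PosSemidef := by
    intro X hX
    rw [push_through (unit_one_add_mul hG hX) (unit_one_add_mul hX hG)]
    exact inv_mul_psd hX hG
  have hRdH : ∀ {X : Matrix (Fin n) (Fin n) ℂ}, X.PosSemidef → (Rd X - H).PosSemidef := by
    intro X hX
    have e : Rd X - H = Aᴴ * (X * (1 + G * X)⁻¹) * A := by rw [hRd]; noncomm_ring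
    rw [e]; exact (hFpsd hX).conjTranspose_mul_mul_same A
  have hRdPSD : ∀ {X : Matrix (Fin n) (Fin n) ℂ}, X.PosSemidef → (Rd X).PosSemidef := by
    intro X hX
    have h := (hRdH hX).add hH
    simpa using h
  have hmono : ∀ {X Z : Matrix (Fin n) (Fin n) ℂ}, X.PosSemidef → Z.PosSemidef →
      (Z - X).PosSemidef → (Rd Z - Rd X).PosSemidef := by
    intro X Z hX hZ hD
    have e : Rd Z - Rd X = Aᴴ * (Z * (1 + G * Z)⁻¹ - X * (1 + G * X)⁻¹) * A := by
      rw [hRd, hRd]; noncomm_ring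
    rw [e]; exact (resolvent_mono hG hX hZ hD).conjTranspose_mul_mul_same A
  set seq : ℕ → Matrix (Fin n) (Fin n) ℂ := fun k => Rd^[k] X₁ with hseq_def
  have hs0 : seq 0 = X₁ := rfl
  have hss : ∀ k, seq (k+1) = Rd (seq k) := fun k => Function.iterate_succ_apply' Rd k X₁
  have hPSDseq : ∀ k, (seq k).PosSemidef := by
    intro k; induction k with
    | zero => exact hX₁
    | succ k ih => rw [hss]; exact hRdPSD ih
  have hmonoseq : ∀ k, (seq (k+1) - seq k).PosSemidef := by
    intro k; induction k with
    | zero =>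
      have h := (hRdH hX₁).add hX₁H
      have e : Rd X₁ - H + (H - X₁) = seq 1 - seq 0 := by rw [hss 0, hs0]; abel
      rwa [e] at h
    | succ k ih =>
      rw [hss (k+1), hss k]
      exact hmono (hPSDseq k) (hRdPSD (hPSDseq k)) (by rw [← hss k]; exact ih)
  have hYseq : ∀ k, (Y - seq k).PosSemidef := by
    intro k; induction k with
    | zero =>
      have h := hYge.add ((hRdH hY).add hX₁H)
      have e : Y - Rd Y + (Rd Y - H + (H - X₁)) = Y - seq 0 := by rw [hs0]; abel
      rwa [e] at h
    | succ k ih =>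
      have h := hYge.add (hmono (hPSDseq k) hY ih)
      have e : Y - Rd Y + (Rd Y - Rd (seq k)) = Y - seq (k+1) := by rw [hss k]; abel
      rwa [e] at h
  have hSseq : ∀ {S : Matrix (Fin n) (Fin n) ℂ}, S.PosSemidef → S = Rd S →
      ∀ k, (S - seq k).PosSemidef := by
    intro S hS hfix k
    induction k with
    | zero =>
      have hSH : (S - H).PosSemidef := by
        have h := hRdH hS; rwa [← hfix] at h
      have h := hSH.add hX₁H
      have e : S - H + (H - X₁) = S - seq 0 := by rw [hs0]; abel
      rwa [e] at h
    | succ k ih =>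
      have h := hmono (hPSDseq k) hS ih
      have e : Rd S - Rd (seq k) = S - seq (k+1) := by rw [hss k, ← hfix]
      rwa [e] at h
  -- convergence of quadratic forms
  have hqconv : ∀ v : Fin n → ℂ,
      ∃ l : ℂ, Tendsto (fun k => star v ⬝ᵥ (seq k *ᵥ v)) atTop (nhds l) := by
    intro v
    set r : ℕ → ℝ := fun k => (star v ⬝ᵥ (seq k *ᵥ v)).re with hr_def
    have hreal : ∀ k, star v ⬝ᵥ (seq k *ᵥ v) = (r k : ℂ) := by
      intro k
      have him := (Complex.le_def.1 ((hPSDseq k).dotProduct_mulVec_nonneg v)).2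
      apply Complex.ext
      · simp [hr_def]
      · simp [hr_def, ← him]
    have hmonor : Monotone r := by
      apply monotone_nat_of_le_succ
      intro k
      have h := (hmonoseq k).dotProduct_mulVec_nonneg v
      have e : star v ⬝ᵥ ((seq (k+1) - seq k) *ᵥ v)
          = star v ⬝ᵥ (seq (k+1) *ᵥ v) - star v ⬝ᵥ (seq k *ᵥ v) := by
        rw [Matrix.sub_mulVec, dotProduct_sub]
      rw [e] at h
      have h2 := (Complex.le_def.1 h).1
      simp only [Complex.zero_re, Complex.sub_re] at h2
      simp only [hr_def]
      linarith
    have hbdd : BddAbove (Set.range r) := by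
      refine ⟨(star v ⬝ᵥ (Y *ᵥ v)).re, ?_⟩
      rintro x ⟨k, rfl⟩
      have h := (hYseq k).dotProduct_mulVec_nonneg v
      have e : star v ⬝ᵥ ((Y - seq k) *ᵥ v)
          = star v ⬝ᵥ (Y *ᵥ v) - star v ⬝ᵥ (seq k *ᵥ v) := by
        rw [Matrix.sub_mulVec, dotProduct_sub]
      rw [e] at h
      have h2 := (Complex.le_def.1 h).1
      simp only [Complex.zero_re, Complex.sub_re] at h2
      simp only [hr_def]
      linarith
    have hlim := tendsto_atTop_ciSup hmonor hbdd
    refine ⟨((⨆ k, r k : ℝ) : ℂ), ?_⟩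
    have h3 : Tendsto (fun k => ((r k : ℝ) : ℂ)) atTop (nhds ((⨆ k, r k : ℝ) : ℂ)) :=
      (Complex.continuous_ofReal.tendsto _).comp hlim
    rw [show (fun k => star v ⬝ᵥ (seq k *ᵥ v)) = fun k => ((r k : ℝ) : ℂ) from funext hreal]
    exact h3
  have hent : ∀ i j, ∃ l : ℂ, Tendsto (fun k => seq k i j) atTop (nhds l) := by
    intro i j
    obtain ⟨l1, h1⟩ := hqconv (Pi.single i 1 + Pi.single j 1)
    obtain ⟨l2, h2⟩ := hqconv (Pi.single i 1 + Pi.single j (-1))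
    obtain ⟨l3, h3⟩ := hqconv (Pi.single i 1 + Pi.single j Complex.I)
    obtain ⟨l4, h4⟩ := hqconv (Pi.single i 1 + Pi.single j (-Complex.I))
    refine ⟨(l1 - l2)/4 + (l3 - l4)/(4*Complex.I), ?_⟩
    have e : (fun k => seq k i j) = fun k =>
        (star (Pi.single i 1 + Pi.single j (1:ℂ)) ⬝ᵥ (seq k *ᵥ (Pi.single i 1 + Pi.single j 1))
          - star (Pi.single i 1 + Pi.single j (-1:ℂ)) ⬝ᵥ
              (seq k *ᵥ (Pi.single i 1 + Pi.single j (-1)))) / 4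
        + (star (Pi.single i 1 + Pi.single j Complex.I) ⬝ᵥ
              (seq k *ᵥ (Pi.single i 1 + Pi.single j Complex.I))
          - star (Pi.single i 1 + Pi.single j (-Complex.I)) ⬝ᵥ
              (seq k *ᵥ (Pi.single i 1 + Pi.single j (-Complex.I)))) / (4 * Complex.I) :=
      funext fun k => polarize (seq k) i j
    rw [e]
    exact ((h1.sub h2).div_const 4).add ((h3.sub h4).div_const (4*Complex.I))
  choose L hL using hent
  have hconv : Tendsto seq atTop (nhds (Matrix.of L)) := by
    apply tendsto_pi_nhds.2
    intro i
    rw [tendsto_pi_nhds]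
    intro j
    exact hL i j
  have hXsPSD : (Matrix.of L).PosSemidef := psd_limit hPSDseq hconv
  have hdet : IsUnit (1 + G * Matrix.of L).det := unit_one_add_mul hG hXsPSD
  have hinvCont : ContinuousAt (fun X : Matrix (Fin n) (Fin n) ℂ => (1 + G * X)⁻¹)
      (Matrix.of L) := by
    have h1 : ContinuousAt Inv.inv (1 + G * Matrix.of L) := by
      apply continuousAt_matrix_inv
      rw [Ring.inverse_eq_inv']
      exact continuousAt_inv₀ (by simpa [isUnit_iff_ne_zero] using hdet)
    have h2 : ContinuousAt (fun X : Matrix (Fin n) (Fin n) ℂ => 1 + G * X) (Matrix.of L) :=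
      (continuous_const.add (continuous_const.matrix_mul continuous_id)).continuousAt
    exact ContinuousAt.comp (f := fun X => 1 + G * X) (g := Inv.inv) h1 h2
  have hRdCont : ContinuousAt Rd (Matrix.of L) := by
    have e : Rd = fun X => H + Aᴴ * X * (1 + G * X)⁻¹ * A := funext hRd
    rw [e]
    exact continuousAt_const.add
      (((continuousAt_const.mul continuousAt_id).mul hinvCont).mul continuousAt_const)
  have hfix : Matrix.of L = Rd (Matrix.of L) := by
    have h1 : Tendsto (fun k => seq (k+1)) atTop (nhds (Matrix.of L)) :=
      hconv.comp (tendsto_add_atTop_nat 1)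
    have h2 : Tendsto (fun k => Rd (seq k)) atTop (nhds (Rd (Matrix.of L))) :=
      hRdCont.tendsto.comp hconv
    have e : (fun k => seq (k+1)) = fun k => Rd (seq k) := funext hss
    rw [e] at h1
    exact tendsto_nhds_unique h1 h2
  refine ⟨hmonoseq, hYseq, Matrix.of L, hconv, hXsPSD, hfix, ?_⟩
  intro S hS hSfix
  exact psd_limit (fun k => hSseq hS hSfix k) (tendsto_const_nhds.sub hconv)
end

section
/- Let A be n×n with ρ(A) < 1, G, H ≥ 0, and define R_d(X) = H + A*X(I + GX)⁻¹A and the Stein operator S_A(X) = X − A*XA. Then the set {X ≥ 0 : S_A(X) ≥ H} is nonempty, and for any X with X ≤ R_d(X) one has S_A(X) ≤ H; consequently every element of {X ≥ 0 : S_A(X) ≥ H} is an upper bound (in the Loewner order) for the set {X ≥ 0 : X ≤ R_d(X)}. -/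
open Matrix ComplexOrder Filter
open scoped Matrix.Norms.L2Operator Topology ENNReal NNReal

section Stmt19Aux

variable {n : ℕ}

lemma aux_norm_pow (A : Matrix (Fin n) (Fin n) ℂ)
    (hρ : ∀ μ ∈ spectrum ℂ A, ‖μ‖ < 1) :
    ∃ q : ℝ, 0 ≤ q ∧ q < 1 ∧ ∀ᶠ k in atTop, ‖A ^ k‖ ≤ q ^ k := by
  have hsr : spectralRadius ℂ A < 1 := by
    rcases isEmpty_or_nonempty (Fin n) with hn | hn
    · have : Subsingleton (Matrix (Fin n) (Fin n) ℂ) := inferInstance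
      rw [spectrum.SpectralRadius.of_subsingleton (𝕜 := ℂ) A]
      exact zero_lt_one
    · have : Nontrivial (Matrix (Fin n) (Fin n) ℂ) := inferInstance
      have := spectrum.spectralRadius_lt_of_forall_lt (a := A) (r := 1)
        (fun z hz => by simpa [← NNReal.coe_lt_coe, coe_nnnorm] using hρ z hz)
      simpa using this
  obtain ⟨q, hq1, hq2⟩ := ENNReal.lt_iff_exists_nnreal_btwn.mp hsr
  have hgel := spectrum.pow_nnnorm_pow_one_div_tendsto_nhds_spectralRadius A
  have hev : ∀ᶠ k : ℕ in atTop, (‖A ^ k‖₊ : ℝ≥0∞) ^ (1 / (k : ℝ)) < (q : ℝ≥0∞) :=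
    hgel.eventually_lt_const hq1
  refine ⟨q, q.coe_nonneg, by exact_mod_cast hq2, ?_⟩
  filter_upwards [hev, eventually_ge_atTop 1] with k hk hk1
  have hk0 : (k : ℝ) ≠ 0 := by positivity
  have h1 : ((‖A ^ k‖₊ : ℝ≥0∞) ^ (1 / (k : ℝ))) ^ (k : ℝ) ≤ ((q : ℝ≥0∞)) ^ (k : ℝ) :=
    ENNReal.rpow_le_rpow hk.le (by positivity)
  rw [← ENNReal.rpow_mul, one_div, inv_mul_cancel₀ hk0, ENNReal.rpow_one,
    ENNReal.rpow_natCast] at h1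
  have h2 : ‖A ^ k‖₊ ≤ q ^ k := by rw [← ENNReal.coe_pow] at h1; exact_mod_cast h1
  calc ‖A ^ k‖ = ((‖A ^ k‖₊ : ℝ≥0) : ℝ) := rfl
    _ ≤ ((q ^ k : ℝ≥0) : ℝ) := by exact_mod_cast h2
    _ = (q : ℝ) ^ k := by push_cast; ring

lemma aux_tendsto_pow (A : Matrix (Fin n) (Fin n) ℂ)
    (hρ : ∀ μ ∈ spectrum ℂ A, ‖μ‖ < 1) :
    Tendsto (fun k => ‖A ^ k‖) atTop (𝓝 0) := by
  obtain ⟨q, hq0, hq1, hev⟩ := aux_norm_pow A hρ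
  have hg : Tendsto (fun k : ℕ => q ^ k) atTop (𝓝 0) :=
    tendsto_pow_atTop_nhds_zero_of_lt_one hq0 hq1
  refine squeeze_zero' (Filter.Eventually.of_forall fun k => norm_nonneg _) hev hg

lemma aux_summable (A H : Matrix (Fin n) (Fin n) ℂ)
    (hρ : ∀ μ ∈ spectrum ℂ A, ‖μ‖ < 1) :
    Summable (fun k : ℕ => (A ^ k)ᴴ * H * (A ^ k)) := by
  obtain ⟨q, hq0, hq1, hev⟩ := aux_norm_pow A hρ
  have hgsum : Summable (fun k : ℕ => ‖H‖ * ((q * q) ^ k)) :=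
    (summable_geometric_of_lt_one (by positivity) (by nlinarith)).mul_left _
  refine .of_norm_bounded_eventually hgsum ?_
  rw [Nat.cofinite_eq_atTop]
  filter_upwards [hev] with k hk
  calc ‖(A ^ k)ᴴ * H * (A ^ k)‖ ≤ ‖(A ^ k)ᴴ * H‖ * ‖A ^ k‖ := l2_opNorm_mul _ _
    _ ≤ ‖(A ^ k)ᴴ‖ * ‖H‖ * ‖A ^ k‖ :=
        mul_le_mul_of_nonneg_right (l2_opNorm_mul _ _) (norm_nonneg _)
    _ = ‖A ^ k‖ * ‖H‖ * ‖A ^ k‖ := by rw [l2_opNorm_conjTranspose]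
    _ ≤ (q ^ k) * ‖H‖ * (q ^ k) := by
        have h0 := norm_nonneg (A ^ k)
        apply mul_le_mul (mul_le_mul hk le_rfl (norm_nonneg _) (by positivity)) hk h0 (by positivity)
    _ = ‖H‖ * ((q * q) ^ k) := by ring

lemma aux_psd_lim {ι : Type*} {l : Filter ι} [l.NeBot] {f : ι → Matrix (Fin n) (Fin n) ℂ}
    {M : Matrix (Fin n) (Fin n) ℂ} (hf : Tendsto f l (𝓝 M))
    (h : ∀ i, (f i).PosSemidef) : M.PosSemidef := by
  refine .of_dotProduct_mulVec_nonneg ?_ ?_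
  · have h1 : Tendsto (fun i => (f i)ᴴ) l (𝓝 Mᴴ) :=
      ((continuous_id.matrix_conjTranspose).tendsto M).comp hf
    have h2 : Tendsto (fun i => (f i)ᴴ) l (𝓝 M) :=
      hf.congr fun i => ((h i).isHermitian).symm
    exact tendsto_nhds_unique h1 h2
  · intro x
    have hc : Continuous fun N : Matrix (Fin n) (Fin n) ℂ => dotProduct (star x) (N *ᵥ x) :=
      continuous_const.dotProduct (continuous_id.matrix_mulVec continuous_const)
    exact ge_of_tendsto ((hc.tendsto M).comp hf) (Eventually.of_forall fun i => (h i).dotProduct_mulVec_nonneg x)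

lemma aux_exists (A H : Matrix (Fin n) (Fin n) ℂ)
    (hρ : ∀ μ ∈ spectrum ℂ A, ‖μ‖ < 1) (hH : H.PosSemidef) :
    ∃ X : Matrix (Fin n) (Fin n) ℂ, X.PosSemidef ∧ X - Aᴴ * X * A = H := by
  set f : ℕ → Matrix (Fin n) (Fin n) ℂ := fun k => (A ^ k)ᴴ * H * (A ^ k) with hf
  have hfs : Summable f := aux_summable A H hρ
  set X := ∑' k, f k with hX
  have hsum : HasSum f X := hfs.hasSum
  have hfpsd : ∀ k, (f k).PosSemidef := fun k => hH.conjTranspose_mul_mul_same (A ^ k)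
  refine ⟨X, ?_, ?_⟩
  · refine aux_psd_lim hsum ?_
    intro s
    exact Finset.sum_induction f _ (fun a b ha hb => ha.add hb) Matrix.PosSemidef.zero
      (fun k _ => hfpsd k)
  · -- the shifted sum
    have hL : ∃ L : Matrix (Fin n) (Fin n) ℂ →L[ℂ] Matrix (Fin n) (Fin n) ℂ,
        ∀ M, L M = Aᴴ * M * A := by
      refine ⟨LinearMap.toContinuousLinearMap
        ((LinearMap.mulRight ℂ A).comp (LinearMap.mulLeft ℂ Aᴴ)), fun M => rfl⟩
    obtain ⟨L, hLdef⟩ := hL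
    have h1 : HasSum (fun k => f (k + 1)) (Aᴴ * X * A) := by
      have := hsum.mapL L
      simp only [hLdef] at this
      have hshift : (fun k => Aᴴ * f k * A) = fun k => f (k + 1) := by
        funext k
        show Aᴴ * ((A ^ k)ᴴ * H * A ^ k) * A = (A ^ (k + 1))ᴴ * H * A ^ (k + 1)
        rw [pow_succ, Matrix.conjTranspose_mul]
        noncomm_ring
      rwa [hshift] at this
    have h2 : HasSum f (Aᴴ * X * A + f 0) := by
      have := (hasSum_nat_add_iff (f := f) 1).mp h1
      simpa using this
    have h3 : X = Aᴴ * X * A + f 0 := hsum.unique h2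
    have hf0 : f 0 = H := by simp [hf]
    rw [hf0] at h3
    nth_rewrite 1 [h3]
    abel

lemma aux_stein (A W : Matrix (Fin n) (Fin n) ℂ)
    (hρ : ∀ μ ∈ spectrum ℂ A, ‖μ‖ < 1) (hWh : W.IsHermitian)
    (hP : (W - Aᴴ * W * A).PosSemidef) : W.PosSemidef := by
  refine .of_dotProduct_mulVec_nonneg hWh fun x => ?_
  set g : ℕ → ℂ := fun N => dotProduct (star ((A ^ N) *ᵥ x)) (W *ᵥ ((A ^ N) *ᵥ x)) with hg
  have key : ∀ (u : Fin n → ℂ), dotProduct (star (A *ᵥ u)) (W *ᵥ (A *ᵥ u))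
      = dotProduct (star u) ((Aᴴ * W * A) *ᵥ u) := by
    intro u
    rw [Matrix.star_mulVec, Matrix.mulVec_mulVec, ← Matrix.dotProduct_mulVec,
      Matrix.mulVec_mulVec, Matrix.mul_assoc]
  have hstep : ∀ N, g (N + 1) ≤ g N := by
    intro N
    have h := hP.dotProduct_mulVec_nonneg ((A ^ N) *ᵥ x)
    rw [Matrix.sub_mulVec, dotProduct_sub, sub_nonneg] at h
    have he : dotProduct (star ((A ^ N) *ᵥ x)) ((Aᴴ * W * A) *ᵥ ((A ^ N) *ᵥ x)) = g (N + 1) := by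
      rw [← key, hg]
      simp only [Matrix.mulVec_mulVec, ← pow_succ']
    rw [he] at h
    exact h
  have hmono : ∀ N, g N ≤ g 0 := by
    intro N
    induction N with
    | zero => exact le_rfl
    | succ k ih => exact (hstep k).trans ih
  set x' : EuclideanSpace ℂ (Fin n) := (WithLp.equiv 2 _).symm x with hx'
  have hgin : ∀ N, g N = inner ℂ ((WithLp.equiv 2 _).symm ((A ^ N) *ᵥ x))
      (toEuclideanCLM (𝕜 := ℂ) W ((WithLp.equiv 2 _).symm ((A ^ N) *ᵥ x))) := by
    intro N
    simp only [WithLp.equiv_symm_apply, toEuclideanCLM_toLp, EuclideanSpace.inner_toLp_toLp]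
    exact dotProduct_comm _ _
  have hbound : ∀ N, ‖g N‖ ≤ (‖A ^ N‖ * ‖x'‖) * (‖W‖ * (‖A ^ N‖ * ‖x'‖)) := by
    intro N
    set u : EuclideanSpace ℂ (Fin n) := (WithLp.equiv 2 _).symm ((A ^ N) *ᵥ x) with hu
    have hun : ‖u‖ ≤ ‖A ^ N‖ * ‖x'‖ := by
      have := Matrix.l2_opNorm_mulVec (A ^ N) x'
      exact this
    have h1 : ‖g N‖ ≤ ‖u‖ * ‖toEuclideanCLM (𝕜 := ℂ) W u‖ := by
      rw [hgin N]
      exact norm_inner_le_norm _ _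
    have h2 : ‖toEuclideanCLM (𝕜 := ℂ) W u‖ ≤ ‖W‖ * ‖u‖ :=
      (toEuclideanCLM (𝕜 := ℂ) W).le_opNorm u
    calc ‖g N‖ ≤ ‖u‖ * ‖toEuclideanCLM (𝕜 := ℂ) W u‖ := h1
      _ ≤ (‖A ^ N‖ * ‖x'‖) * (‖W‖ * (‖A ^ N‖ * ‖x'‖)) := by
          apply mul_le_mul hun (h2.trans ?_) (norm_nonneg _) (by positivity)
          exact mul_le_mul_of_nonneg_left hun (norm_nonneg _)
  have hb0 : Tendsto (fun N : ℕ => (‖A ^ N‖ * ‖x'‖) * (‖W‖ * (‖A ^ N‖ * ‖x'‖))) atTop (𝓝 0) := by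
    have h := aux_tendsto_pow A hρ
    have := ((h.mul_const ‖x'‖).mul (((h.mul_const ‖x'‖)).const_mul ‖W‖))
    simpa using this
  have hg0 : Tendsto g atTop (𝓝 0) := by
    refine tendsto_zero_iff_norm_tendsto_zero.mpr ?_
    exact squeeze_zero (fun N => norm_nonneg _) hbound hb0
  have hfin : (0 : ℂ) ≤ g 0 := le_of_tendsto hg0 (Eventually.of_forall hmono)
  simpa [hg, Matrix.one_mulVec] using hfin

open scoped MatrixOrder in
lemma aux_part2 (A G H : Matrix (Fin n) (Fin n) ℂ)
    (hG : G.PosSemidef) (X : Matrix (Fin n) (Fin n) ℂ) (hX : X.PosSemidef)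
    (h2 : ((H + Aᴴ * X * (1 + G * X)⁻¹ * A) - X).PosSemidef) :
    (H - (X - Aᴴ * X * A)).PosSemidef := by
  classical
  set C := CFC.sqrt G with hCdef
  have hC : C.PosSemidef := Matrix.nonneg_iff_posSemidef.mp (CFC.sqrt_nonneg G)
  have hCherm : Cᴴ = C := hC.isHermitian
  have hXherm : Xᴴ = X := hX.isHermitian
  have hCXC : (C * X * C).PosSemidef := by
    have := hX.conjTranspose_mul_mul_same C
    rwa [hCherm] at this
  set K : Matrix (Fin n) (Fin n) ℂ := 1 + C * X * C with hKdef
  have hK : K.PosDef := Matrix.PosDef.add_posSemidef Matrix.PosDef.one hCXC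
  have hKdetu : IsUnit K.det := (Matrix.isUnit_iff_isUnit_det K).mp hK.isUnit
  have hKK : K * K⁻¹ = 1 := Matrix.mul_nonsing_inv K hKdetu
  have hKK' : K⁻¹ * K = 1 := Matrix.nonsing_inv_mul K hKdetu
  have hGCC : G = C * C := (CFC.sqrt_mul_sqrt_self G (Matrix.nonneg_iff_posSemidef.mpr hG)).symm
  have hinv : (1 + G * X)⁻¹ = 1 - C * K⁻¹ * (C * X) := by
    apply Matrix.inv_eq_right_inv
    have h1 : (1 + G * X) * (1 - C * K⁻¹ * (C * X))
        = 1 + C * (C * X) - C * (K * K⁻¹) * (C * X) := by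
      rw [hGCC, hKdef]
      noncomm_ring
    rw [h1, hKK, mul_one]
    abel
  have hsplit : Aᴴ * X * (1 + G * X)⁻¹ * A
      = Aᴴ * X * A - (C * X * A)ᴴ * K⁻¹ * (C * X * A) := by
    rw [hinv]
    have : (C * X * A)ᴴ = Aᴴ * (X * C) := by
      rw [Matrix.conjTranspose_mul, Matrix.conjTranspose_mul, hCherm, hXherm]
    rw [this]
    noncomm_ring
  have hM : ((C * X * A)ᴴ * K⁻¹ * (C * X * A)).PosSemidef :=
    (hK.inv.posSemidef).conjTranspose_mul_mul_same (C * X * A)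
  have hfinal : H - (X - Aᴴ * X * A)
      = ((H + Aᴴ * X * (1 + G * X)⁻¹ * A) - X) + (C * X * A)ᴴ * K⁻¹ * (C * X * A) := by
    rw [hsplit]
    abel
  rw [hfinal]
  exact h2.add hM

end Stmt19Aux

theorem stmt_19 (n : ℕ) (A G H : Matrix (Fin n) (Fin n) ℂ)
    (hρ : ∀ μ ∈ spectrum ℂ A, ‖μ‖ < 1)
    (hG : G.PosSemidef) (hH : H.PosSemidef) :
    (∃ X : Matrix (Fin n) (Fin n) ℂ, X.PosSemidef ∧
      ((X - Aᴴ * X * A) - H).PosSemidef) ∧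
    (∀ X : Matrix (Fin n) (Fin n) ℂ, X.PosSemidef →
      ((H + Aᴴ * X * (1 + G * X)⁻¹ * A) - X).PosSemidef →
      (H - (X - Aᴴ * X * A)).PosSemidef) ∧
    (∀ Z X : Matrix (Fin n) (Fin n) ℂ,
      Z.PosSemidef → ((Z - Aᴴ * Z * A) - H).PosSemidef →
      X.PosSemidef → ((H + Aᴴ * X * (1 + G * X)⁻¹ * A) - X).PosSemidef →
      (Z - X).PosSemidef) := by
  refine ⟨?_, fun X hX h2 => aux_part2 A G H hG X hX h2, ?_⟩
  · obtain ⟨X, hX, heq⟩ := aux_exists A H hρ hH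
    exact ⟨X, hX, by rw [heq, sub_self]; exact Matrix.PosSemidef.zero⟩
  · intro Z X hZ h1 hX h2
    have hHm := aux_part2 A G H hG X hX h2
    have hWherm : (Z - X).IsHermitian := hZ.isHermitian.sub hX.isHermitian
    have e : (Z - X) - Aᴴ * (Z - X) * A
        = ((Z - Aᴴ * Z * A) - H) + (H - (X - Aᴴ * X * A)) := by noncomm_ring
    exact aux_stein A (Z - X) hρ hWherm (by rw [e]; exact h1.add hHm)
end
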